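/- arXiv:1705.03328 — 4 statements merged into one kernel-verified Lean document; each statement's English description precedes it below -/
import Mathlib

section
/- Let 𝔼 = ⋂_{k∈ℕ} 𝔼_k ⊂ (0,1) be a Cantor-like set, where 𝔼_0 = (0,1) and each 𝔼_k is a finite union of mutually disjoint closed intervals with 𝔼_k ⊂ 𝔼_{k−1}. Suppose there exist constants 0 ≤ δ ≤ 1 and c > 0 such that for every k ≥ 1 and every interval E_{k−1} of level 𝔼_{k−1}: (1) the minimal gap ε_k(E_{k−1}) between distinct level-k intervals inside E_{k−1} satisfies ε_k(E_{k−1}) ≥ c·|E_{k−1}|/m_k(E_{k−1}), where m_k(E_{k−1}) is the number of level-k intervals contained in E_{k−1}; and (2) every level-k interval E_k ⊂ E_{k−1} satisfies |E_k|^δ ≥ |E_{k−1}|^δ / m_k(E_{k−1}). Then the Hausdorff dimension of 𝔼 is at least δ. -/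
open MeasureTheory

open scoped Classical

/-- The finset of level-`k+1` intervals contained in `q`. -/
noncomputable def childs (F : ℕ → Finset (ℝ × ℝ)) (k : ℕ) (q : ℝ × ℝ) : Finset (ℝ × ℝ) :=
  (F (k + 1)).filter fun p => Set.Icc p.1 p.2 ⊆ Set.Icc q.1 q.2

noncomputable def mcard (F : ℕ → Finset (ℝ × ℝ)) (k : ℕ) (q : ℝ × ℝ) : ℕ :=
  (childs F k q).card

/-- The finset of level-`k` intervals containing `p` (the "parents"). -/
noncomputable def pfil (F : ℕ → Finset (ℝ × ℝ)) (k : ℕ) (p : ℝ × ℝ) : Finset (ℝ × ℝ) :=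
  (F k).filter fun q => Set.Icc p.1 p.2 ⊆ Set.Icc q.1 q.2

/-- The natural mass distribution on the tree of intervals. -/
noncomputable def mass (F : ℕ → Finset (ℝ × ℝ)) : ℕ → ℝ × ℝ → ℝ
  | 0, _ => 1
  | (k + 1), p => ∑ q ∈ pfil F k p, mass F k q / (mcard F k q)

/-- All the hypotheses of the theorem, bundled. -/
structure Good (F : ℕ → Finset (ℝ × ℝ)) (δ c : ℝ) : Prop where
  hδ0 : 0 ≤ δ
  hδ1 : δ ≤ 1
  hc : 0 < c
  hF0 : F 0 = {((0 : ℝ), (1 : ℝ))}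
  hlt : ∀ k, ∀ p ∈ F k, p.1 < p.2
  hdisj : ∀ k, 1 ≤ k → ∀ p ∈ F k, ∀ q ∈ F k, p ≠ q →
      Disjoint (Set.Icc p.1 p.2) (Set.Icc q.1 q.2)
  hsub1 : ∀ p ∈ F 1, Set.Icc p.1 p.2 ⊆ Set.Ioo (0 : ℝ) 1
  hnest : ∀ k, 1 ≤ k → ∀ p ∈ F (k + 1), ∃ q ∈ F k, Set.Icc p.1 p.2 ⊆ Set.Icc q.1 q.2
  hm : ∀ k, ∀ q ∈ F k, 2 ≤ mcard F k q
  hgap : ∀ k, ∀ q ∈ F k, ∀ p ∈ F (k + 1), ∀ p' ∈ F (k + 1), p ≠ p' →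
      Set.Icc p.1 p.2 ⊆ Set.Icc q.1 q.2 → Set.Icc p'.1 p'.2 ⊆ Set.Icc q.1 q.2 →
      ∀ x ∈ Set.Icc p.1 p.2, ∀ y ∈ Set.Icc p'.1 p'.2,
        c * (q.2 - q.1) / (mcard F k q : ℝ) ≤ |x - y|
  hlen : ∀ k, ∀ q ∈ F k, ∀ p ∈ F (k + 1), Set.Icc p.1 p.2 ⊆ Set.Icc q.1 q.2 →
      (q.2 - q.1) ^ δ / (mcard F k q : ℝ) ≤ (p.2 - p.1) ^ δ

namespace Good

variable {F : ℕ → Finset (ℝ × ℝ)} {δ c : ℝ} (H : Good F δ c)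
include H

lemma len_pos {k : ℕ} {p : ℝ × ℝ} (hp : p ∈ F k) : 0 < p.2 - p.1 :=
  sub_pos.2 (H.hlt k p hp)

lemma icc_ne {k : ℕ} {p : ℝ × ℝ} (hp : p ∈ F k) : (Set.Icc p.1 p.2).Nonempty :=
  Set.nonempty_Icc.2 (H.hlt k p hp).le

/-- uniqueness of the level-`k` interval containing a given nonempty set -/
lemma parent_unique {k : ℕ} {S : Set ℝ} (hS : S.Nonempty) {q q' : ℝ × ℝ}
    (hq : q ∈ F k) (hq' : q' ∈ F k) (h1 : S ⊆ Set.Icc q.1 q.2)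
    (h2 : S ⊆ Set.Icc q'.1 q'.2) : q = q' := by
  rcases Nat.eq_zero_or_pos k with rfl | hk
  · rw [H.hF0] at hq hq'
    simp only [Finset.mem_singleton] at hq hq'
    rw [hq, hq']
  · by_contra hne
    exact hS.not_subset_empty (by
      have := (H.hdisj k hk q hq q' hq' hne).inter_eq
      exact fun x hx => by
        have : x ∈ Set.Icc q.1 q.2 ∩ Set.Icc q'.1 q'.2 := ⟨h1 hx, h2 hx⟩
        rwa [(H.hdisj k hk q hq q' hq' hne).inter_eq] at this)

lemma parent_exists {k : ℕ} {p : ℝ × ℝ} (hp : p ∈ F (k + 1)) :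
    ∃ q ∈ F k, Set.Icc p.1 p.2 ⊆ Set.Icc q.1 q.2 := by
  rcases Nat.eq_zero_or_pos k with rfl | hk
  · refine ⟨((0 : ℝ), (1 : ℝ)), by simp [H.hF0], ?_⟩
    exact fun x hx => Set.Ioo_subset_Icc_self (H.hsub1 p hp hx)
  · exact H.hnest k hk p hp

/-- the parent filter of `p ∈ F (k+1)` is a singleton -/
lemma pfil_eq {k : ℕ} {p : ℝ × ℝ} (hp : p ∈ F (k + 1)) :
    ∃ q, q ∈ F k ∧ Set.Icc p.1 p.2 ⊆ Set.Icc q.1 q.2 ∧ pfil F k p = {q} := by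
  obtain ⟨q, hq, hsub⟩ := H.parent_exists hp
  refine ⟨q, hq, hsub, ?_⟩
  apply Finset.eq_singleton_iff_unique_mem.2
  refine ⟨(by rw [pfil]; exact Finset.mem_filter.2 ⟨hq, hsub⟩), fun x hx => ?_⟩
  rw [pfil, Finset.mem_filter] at hx
  exact H.parent_unique (Set.nonempty_Icc.2 (H.hlt _ p hp).le) hx.1 hq hx.2 hsub

lemma mass_succ {k : ℕ} {p : ℝ × ℝ} (hp : p ∈ F (k + 1)) {q : ℝ × ℝ} (hq : q ∈ F k)
    (hsub : Set.Icc p.1 p.2 ⊆ Set.Icc q.1 q.2) :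
    mass F (k + 1) p = mass F k q / (mcard F k q) := by
  obtain ⟨q', hq', hsub', hfil⟩ := H.pfil_eq hp
  have : q = q' := H.parent_unique (H.icc_ne hp) hq hq' hsub hsub'
  subst this
  rw [mass, hfil, Finset.sum_singleton]

omit H in
lemma mass_nonneg : ∀ (k : ℕ) (p : ℝ × ℝ), 0 ≤ mass F k p
  | 0, p => by rw [mass]; norm_num
  | (k + 1), p => by
      rw [mass]
      exact Finset.sum_nonneg fun q _ => div_nonneg (mass_nonneg k q) (Nat.cast_nonneg _)

lemma mcard_pos {k : ℕ} {q : ℝ × ℝ} (hq : q ∈ F k) : 0 < mcard F k q :=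
  lt_of_lt_of_le (by norm_num) (H.hm k q hq)

lemma mass_le : ∀ (k : ℕ), ∀ p ∈ F k, mass F k p ≤ (p.2 - p.1) ^ δ := by
  intro k
  induction k with
  | zero =>
      intro p hp
      rw [H.hF0] at hp
      simp only [Finset.mem_singleton] at hp
      subst hp
      rw [mass]; norm_num
  | succ k ih =>
      intro p hp
      obtain ⟨q, hq, hsub, _⟩ := H.pfil_eq hp
      rw [H.mass_succ hp hq hsub]
      calc mass F k q / (mcard F k q : ℝ)
          ≤ (q.2 - q.1) ^ δ / (mcard F k q : ℝ) := by
            gcongr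
            exact ih q hq
        _ ≤ (p.2 - p.1) ^ δ := H.hlen k q hq p hp hsub




omit H in
lemma mem_childs {k : ℕ} {q p : ℝ × ℝ} :
    p ∈ childs F k q ↔ p ∈ F (k + 1) ∧ Set.Icc p.1 p.2 ⊆ Set.Icc q.1 q.2 := by
  simp [childs]

lemma sum_childs {k : ℕ} {q : ℝ × ℝ} (hq : q ∈ F k) :
    ∑ p ∈ childs F k q, mass F (k + 1) p = mass F k q := by
  have h1 : ∀ p ∈ childs F k q, mass F (k + 1) p = mass F k q / (mcard F k q : ℝ) :=
    fun p hp => H.mass_succ (mem_childs.1 hp).1 hq (mem_childs.1 hp).2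
  have hne : (mcard F k q : ℝ) ≠ 0 := by
    exact_mod_cast (H.mcard_pos hq).ne'
  rw [Finset.sum_congr rfl h1, Finset.sum_const, nsmul_eq_mul]
  rw [show (childs F k q).card = mcard F k q from rfl]
  field_simp

lemma childs_pairwise_disj (k : ℕ) :
    (↑(F k) : Set (ℝ × ℝ)).PairwiseDisjoint (childs F k) := by
  intro q hq q' hq' hne
  rw [Function.onFun, Finset.disjoint_left]
  intro p hp hp'
  exact hne (H.parent_unique (H.icc_ne (mem_childs.1 hp).1) (by exact_mod_cast hq)
    (by exact_mod_cast hq') (mem_childs.1 hp).2 (mem_childs.1 hp').2)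

lemma biUnion_childs (k : ℕ) : F (k + 1) = (F k).biUnion (childs F k) := by
  apply Finset.ext
  intro p
  simp only [Finset.mem_biUnion]
  constructor
  · intro hp
    obtain ⟨q, hq, hsub⟩ := H.parent_exists hp
    exact ⟨q, hq, mem_childs.2 ⟨hp, hsub⟩⟩
  · rintro ⟨q, _, hp⟩
    exact (mem_childs.1 hp).1

lemma sum_mass (k : ℕ) : ∑ p ∈ F k, mass F k p = 1 := by
  induction k with
  | zero => rw [H.hF0]; simp [mass]
  | succ k ih =>
      rw [H.biUnion_childs k, Finset.sum_biUnion (H.childs_pairwise_disj k)]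
      rw [Finset.sum_congr rfl fun q hq => H.sum_childs hq, ih]

lemma anc : ∀ (t j : ℕ), ∀ p ∈ F (j + t), ∃ a ∈ F j, Set.Icc p.1 p.2 ⊆ Set.Icc a.1 a.2 := by
  intro t
  induction t with
  | zero => exact fun j p hp => ⟨p, hp, le_refl _⟩
  | succ t ih =>
      intro j p hp
      obtain ⟨q, hq, hsub⟩ := H.parent_exists (show p ∈ F ((j + t) + 1) from hp)
      obtain ⟨a, ha, hsub'⟩ := ih j q hq
      exact ⟨a, ha, hsub.trans hsub'⟩

end Good

/-- the finset of level-`n` intervals contained in the interval `[x, y]` -/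
noncomputable def descSet (F : ℕ → Finset (ℝ × ℝ)) (n : ℕ) (x y : ℝ) : Finset (ℝ × ℝ) :=
  (F n).filter fun p => Set.Icc p.1 p.2 ⊆ Set.Icc x y

namespace Good

variable {F : ℕ → Finset (ℝ × ℝ)} {δ c : ℝ} (H : Good F δ c)

lemma mem_descSet {n : ℕ} {x y : ℝ} {p : ℝ × ℝ} :
    p ∈ descSet F n x y ↔ p ∈ F n ∧ Set.Icc p.1 p.2 ⊆ Set.Icc x y := by
  simp [descSet]

include H

lemma sum_desc : ∀ (t j : ℕ), 1 ≤ j → ∀ r ∈ F j,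
    ∑ p ∈ descSet F (j + t) r.1 r.2, mass F (j + t) p = mass F j r := by
  intro t
  induction t with
  | zero =>
      intro j hj r hr
      have h : descSet F j r.1 r.2 = {r} := by
        apply Finset.eq_singleton_iff_unique_mem.2
        refine ⟨mem_descSet.2 ⟨hr, le_refl _⟩, fun p hp => ?_⟩
        rw [mem_descSet] at hp
        exact H.parent_unique (H.icc_ne hp.1) hp.1 hr (le_refl _) hp.2
      simp only [Nat.add_zero]
      rw [h, Finset.sum_singleton]
  | succ t ih =>
      intro j hj r hr
      have hbi : descSet F (j + (t + 1)) r.1 r.2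
          = (descSet F (j + t) r.1 r.2).biUnion (childs F (j + t)) := by
        apply Finset.ext
        intro p
        simp only [Finset.mem_biUnion, mem_descSet]
        constructor
        · rintro ⟨hp, hsub⟩
          have hp' : p ∈ F ((j + t) + 1) := hp
          obtain ⟨q, hq, hsubq⟩ := H.parent_exists hp'
          obtain ⟨a, ha, hsuba⟩ := H.anc t j q hq
          have har : a = r := H.parent_unique (H.icc_ne hp') ha hr
            (hsubq.trans hsuba) hsub
          refine ⟨q, ⟨hq, ?_⟩, mem_childs.2 ⟨hp', hsubq⟩⟩
          rw [← har]; exact hsuba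
        · rintro ⟨q, ⟨hq, hsubq⟩, hp⟩
          exact ⟨(mem_childs.1 hp).1, (mem_childs.1 hp).2.trans hsubq⟩
      rw [show j + (t + 1) = (j + t) + 1 from rfl] at *
      rw [hbi, Finset.sum_biUnion ((H.childs_pairwise_disj (j + t)).subset
        (by intro q hq; exact_mod_cast (mem_descSet.1 hq).1))]
      calc ∑ q ∈ descSet F (j + t) r.1 r.2, ∑ p ∈ childs F (j + t) q, mass F ((j + t) + 1) p
          = ∑ q ∈ descSet F (j + t) r.1 r.2, mass F (j + t) q :=
            Finset.sum_congr rfl fun q hq => H.sum_childs (mem_descSet.1 hq).1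
        _ = mass F j r := ih j hj r hr

lemma sum_desc' {j n : ℕ} (hj : 1 ≤ j) (hn : j ≤ n) {r : ℝ × ℝ} (hr : r ∈ F j) :
    ∑ p ∈ descSet F n r.1 r.2, mass F n p = mass F j r := by
  obtain ⟨t, rfl⟩ := Nat.exists_eq_add_of_le hn
  exact H.sum_desc t j hj r hr


end Good

/-- Counting separated points in an interval, via Lebesgue measure. -/
lemma card_mul_gap_le (t : Finset (ℝ × ℝ)) (x : ℝ × ℝ → ℝ) (g u1 u2 : ℝ) (hg : 0 < g)
    (hu : u1 ≤ u2)
    (hsep : ∀ a ∈ t, ∀ b ∈ t, a ≠ b → g ≤ |x a - x b|)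
    (hmem : ∀ a ∈ t, x a ∈ Set.Icc u1 u2) :
    (t.card : ℝ) * g ≤ (u2 - u1) + g := by
  have hdisj : (↑t : Set (ℝ × ℝ)).PairwiseDisjoint
      (fun a => Set.Ioo (x a - g / 2) (x a + g / 2)) := by
    intro a ha b hb hne
    rw [Function.onFun, Set.disjoint_left]
    intro z hz1 hz2
    rw [Set.mem_Ioo] at hz1 hz2
    have h1 := hsep a (by exact_mod_cast ha) b (by exact_mod_cast hb) hne
    have h2 : |x a - x b| ≤ |x a - z| + |z - x b| := abs_sub_le _ _ _
    have h3 : |x a - z| < g / 2 := abs_sub_lt_iff.2 ⟨by linarith [hz1.1, hz1.2], by linarith [hz1.1, hz1.2]⟩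
    have h4 : |z - x b| < g / 2 := abs_sub_lt_iff.2 ⟨by linarith [hz2.1, hz2.2], by linarith [hz2.1, hz2.2]⟩
    linarith
  have hmeas := measure_biUnion_finset hdisj
    (fun b _ => (measurableSet_Ioo : MeasurableSet (Set.Ioo (x b - g / 2) (x b + g / 2))))
    (μ := volume)
  have hsub : (⋃ a ∈ t, Set.Ioo (x a - g / 2) (x a + g / 2))
      ⊆ Set.Ioo (u1 - g / 2) (u2 + g / 2) := by
    intro z hz
    simp only [Set.mem_iUnion] at hz
    obtain ⟨a, ha, hz⟩ := hz
    rw [Set.mem_Ioo] at hz ⊢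
    have := hmem a ha
    rw [Set.mem_Icc] at this
    constructor <;> linarith [hz.1, hz.2, this.1, this.2]
  have hle : ∑ a ∈ t, volume (Set.Ioo (x a - g / 2) (x a + g / 2))
      ≤ ENNReal.ofReal ((u2 - u1) + g) := by
    rw [← hmeas]
    calc volume (⋃ a ∈ t, Set.Ioo (x a - g / 2) (x a + g / 2))
        ≤ volume (Set.Ioo (u1 - g / 2) (u2 + g / 2)) := measure_mono hsub
      _ = ENNReal.ofReal ((u2 - u1) + g) := by rw [Real.volume_Ioo]; ring_nf
  have heach : ∀ a ∈ t, volume (Set.Ioo (x a - g / 2) (x a + g / 2)) = ENNReal.ofReal g := by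
    intro a _
    rw [Real.volume_Ioo]
    ring_nf
  rw [Finset.sum_congr rfl heach, Finset.sum_const, nsmul_eq_mul,
    ← ENNReal.ofReal_natCast, ← ENNReal.ofReal_mul (by positivity)] at hle
  exact (ENNReal.ofReal_le_ofReal_iff (by linarith)).1 hle

namespace Good

variable {F : ℕ → Finset (ℝ × ℝ)} {δ c : ℝ} (H : Good F δ c)
include H

lemma gap_pos {k : ℕ} {q : ℝ × ℝ} (hq : q ∈ F k) : 0 < c * (q.2 - q.1) / (mcard F k q : ℝ) := by
  have h1 := H.len_pos hq
  have h2 : (0 : ℝ) < mcard F k q := by exact_mod_cast H.mcard_pos hq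
  exact div_pos (mul_pos H.hc h1) h2

/-- Each child is substantially shorter than its parent. -/
lemma shrink {k : ℕ} {q : ℝ × ℝ} (hq : q ∈ F k) {p : ℝ × ℝ} (hp : p ∈ childs F k q) :
    p.2 - p.1 ≤ (q.2 - q.1) * (1 - c / 2) := by
  set g := c * (q.2 - q.1) / (mcard F k q : ℝ) with hgdef
  have hg : 0 < g := H.gap_pos hq
  have hdisj : (↑(childs F k q) : Set (ℝ × ℝ)).PairwiseDisjoint
      (fun r => Set.Ioo (r.1 - g / 2) (r.2 + g / 2)) := by
    intro a ha b hb hne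
    rw [Function.onFun, Set.disjoint_left]
    intro z hz1 hz2
    rw [Set.mem_Ioo] at hz1 hz2
    rw [Finset.mem_coe] at ha hb
    have hax := H.hlt _ _ (mem_childs.1 ha).1
    have hbx := H.hlt _ _ (mem_childs.1 hb).1
    -- find a point of `Icc a` within `g/2` of `z`
    have hA : ∃ xa ∈ Set.Icc (a.1 : ℝ) a.2, |xa - z| < g / 2 := by
      rcases lt_trichotomy z a.1 with h | h | h
      · exact ⟨a.1, Set.mem_Icc.2 ⟨le_refl _, hax.le⟩, abs_sub_lt_iff.2 ⟨by linarith [hz1.1], by linarith [hz1.1]⟩⟩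
      · exact ⟨z, Set.mem_Icc.2 ⟨h.ge, by linarith [hz1.2, hax]⟩, by simpa using hg⟩
      · rcases le_or_gt z a.2 with h2 | h2
        · exact ⟨z, Set.mem_Icc.2 ⟨h.le, h2⟩, by simpa using hg⟩
        · exact ⟨a.2, Set.mem_Icc.2 ⟨hax.le, le_refl _⟩, abs_sub_lt_iff.2 ⟨by linarith [hz1.2], by linarith [hz1.2]⟩⟩
    have hB : ∃ xb ∈ Set.Icc (b.1 : ℝ) b.2, |xb - z| < g / 2 := by
      rcases lt_trichotomy z b.1 with h | h | h
      · exact ⟨b.1, Set.mem_Icc.2 ⟨le_refl _, hbx.le⟩, abs_sub_lt_iff.2 ⟨by linarith [hz2.1], by linarith [hz2.1]⟩⟩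
      · exact ⟨z, Set.mem_Icc.2 ⟨h.ge, by linarith [hz2.2, hbx]⟩, by simpa using hg⟩
      · rcases le_or_gt z b.2 with h2 | h2
        · exact ⟨z, Set.mem_Icc.2 ⟨h.le, h2⟩, by simpa using hg⟩
        · exact ⟨b.2, Set.mem_Icc.2 ⟨hbx.le, le_refl _⟩, abs_sub_lt_iff.2 ⟨by linarith [hz2.2], by linarith [hz2.2]⟩⟩
    obtain ⟨xa, hxa, hxa2⟩ := hA
    obtain ⟨xb, hxb, hxb2⟩ := hB
    have hgap := H.hgap k q hq a (mem_childs.1 ha).1 b (mem_childs.1 hb).1 hne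
      (mem_childs.1 ha).2 (mem_childs.1 hb).2 xa hxa xb hxb
    have : |xa - xb| ≤ |xa - z| + |z - xb| := abs_sub_le _ _ _
    rw [abs_sub_comm xb z] at hxb2
    rw [← hgdef] at hgap
    linarith
  have hmeas := measure_biUnion_finset hdisj
    (fun b _ => (measurableSet_Ioo : MeasurableSet (Set.Ioo (b.1 - g / 2) (b.2 + g / 2))))
    (μ := volume)
  have hqlt := H.hlt k q hq
  have hsub : (⋃ r ∈ childs F k q, Set.Ioo (r.1 - g / 2) (r.2 + g / 2))
      ⊆ Set.Ioo (q.1 - g / 2) (q.2 + g / 2) := by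
    intro z hz
    simp only [Set.mem_iUnion] at hz
    obtain ⟨r, hr, hz⟩ := hz
    rw [Set.mem_Ioo] at hz ⊢
    have hrlt := H.hlt _ _ (mem_childs.1 hr).1
    have h1 := (mem_childs.1 hr).2 (Set.left_mem_Icc.2 hrlt.le)
    have h2 := (mem_childs.1 hr).2 (Set.right_mem_Icc.2 hrlt.le)
    rw [Set.mem_Icc] at h1 h2
    constructor <;> linarith [hz.1, hz.2, h1.1, h2.2]
  have hle : ∑ r ∈ childs F k q, ENNReal.ofReal ((r.2 - r.1) + g)
      ≤ ENNReal.ofReal ((q.2 - q.1) + g) := by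
    have heach : ∀ r ∈ childs F k q, volume (Set.Ioo (r.1 - g / 2) (r.2 + g / 2))
        = ENNReal.ofReal ((r.2 - r.1) + g) := by
      intro r _
      rw [Real.volume_Ioo]; ring_nf
    rw [← Finset.sum_congr rfl heach, ← hmeas]
    calc volume (⋃ r ∈ childs F k q, Set.Ioo (r.1 - g / 2) (r.2 + g / 2))
        ≤ volume (Set.Ioo (q.1 - g / 2) (q.2 + g / 2)) := measure_mono hsub
      _ = ENNReal.ofReal ((q.2 - q.1) + g) := by rw [Real.volume_Ioo]; ring_nf
  -- pass to the reals
  have hreal : ∑ r ∈ childs F k q, ((r.2 - r.1) + g) ≤ (q.2 - q.1) + g := by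
    rw [← ENNReal.ofReal_sum_of_nonneg (fun r hr => by
      have := H.hlt _ _ (mem_childs.1 hr).1; linarith)] at hle
    exact (ENNReal.ofReal_le_ofReal_iff (by linarith)).1 hle
  -- extract the contribution of `p` and the other `m - 1` gaps
  have hcard : (childs F k q).card = mcard F k q := rfl
  have hsum_lower : (p.2 - p.1 + g) + ((mcard F k q : ℝ) - 1) * g
      ≤ ∑ r ∈ childs F k q, ((r.2 - r.1) + g) := by
    rw [← Finset.add_sum_erase _ _ hp]
    have h1 : ((mcard F k q : ℝ) - 1) * g ≤ ∑ r ∈ (childs F k q).erase p, ((r.2 - r.1) + g) := by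
      have hle2 : ∑ r ∈ (childs F k q).erase p, g ≤ ∑ r ∈ (childs F k q).erase p, ((r.2 - r.1) + g) := by
        apply Finset.sum_le_sum
        intro r hr
        have := H.hlt _ _ (mem_childs.1 (Finset.mem_of_mem_erase hr)).1
        linarith
      rw [Finset.sum_const, nsmul_eq_mul, Finset.card_erase_of_mem hp, hcard] at hle2
      have hm2 : 2 ≤ mcard F k q := H.hm k q hq
      have : ((mcard F k q - 1 : ℕ) : ℝ) = (mcard F k q : ℝ) - 1 := by
        rw [Nat.cast_sub (by omega)]; norm_num
      rwa [this] at hle2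
    linarith
  have hm2 : (2 : ℝ) ≤ (mcard F k q : ℝ) := by exact_mod_cast H.hm k q hq
  have hL : 0 < q.2 - q.1 := H.len_pos hq
  have hkey : p.2 - p.1 ≤ (q.2 - q.1) - ((mcard F k q : ℝ) - 1) * g := by linarith
  have hmul : g * (mcard F k q : ℝ) = c * (q.2 - q.1) := by
    rw [hgdef]; field_simp
  have hgap2 : c * (q.2 - q.1) / 2 ≤ ((mcard F k q : ℝ) - 1) * g := by
    nlinarith [mul_nonneg (by linarith : (0:ℝ) ≤ (mcard F k q : ℝ) - 2) hg.le]
  nlinarith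

lemma half_pos : 0 < 1 - c / 2 := by
  have hq0 : ((0 : ℝ), (1 : ℝ)) ∈ F 0 := by rw [H.hF0]; simp
  have hne : (childs F 0 ((0 : ℝ), (1 : ℝ))).Nonempty := by
    rw [← Finset.card_pos, show (childs F 0 ((0:ℝ),(1:ℝ))).card = mcard F 0 _ from rfl]
    have := H.hm 0 _ hq0
    omega
  obtain ⟨p, hp⟩ := hne
  have h1 := H.len_pos (mem_childs.1 hp).1
  have h2 := H.shrink hq0 hp
  simp only [] at h2
  nlinarith

lemma len_le : ∀ (n : ℕ), ∀ p ∈ F n, p.2 - p.1 ≤ (1 - c / 2) ^ n := by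
  intro n
  induction n with
  | zero =>
      intro p hp
      rw [H.hF0] at hp
      simp only [Finset.mem_singleton] at hp
      subst hp
      norm_num
  | succ n ih =>
      intro p hp
      obtain ⟨q, hq, hsub⟩ := H.parent_exists hp
      calc p.2 - p.1 ≤ (q.2 - q.1) * (1 - c / 2) := H.shrink hq (mem_childs.2 ⟨hp, hsub⟩)
        _ ≤ (1 - c / 2) ^ n * (1 - c / 2) :=
            mul_le_mul_of_nonneg_right (ih q hq) H.half_pos.le
        _ = (1 - c / 2) ^ (n + 1) := by ring

end Good

/-- the finset of level-`n` intervals meeting the interval `[x, y]` -/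
noncomputable def meetSet (F : ℕ → Finset (ℝ × ℝ)) (n : ℕ) (x y : ℝ) : Finset (ℝ × ℝ) :=
  (F n).filter fun p => (Set.Icc p.1 p.2 ∩ Set.Icc x y).Nonempty

namespace Good

variable {F : ℕ → Finset (ℝ × ℝ)} {δ c : ℝ} (H : Good F δ c)

lemma mem_meetSet {n : ℕ} {x y : ℝ} {p : ℝ × ℝ} :
    p ∈ meetSet F n x y ↔ p ∈ F n ∧ (Set.Icc p.1 p.2 ∩ Set.Icc x y).Nonempty := by
  simp [meetSet]

include H

lemma chain (u1 u2 : ℝ) : ∀ n : ℕ,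
    (∀ j, j < n → ∀ q ∈ meetSet F j u1 u2, u2 - u1 < c * (q.2 - q.1) / (mcard F j q : ℝ)) →
    (meetSet F n u1 u2).card ≤ 1 := by
  intro n
  induction n with
  | zero =>
      intro _
      calc (meetSet F 0 u1 u2).card ≤ (F 0).card := Finset.card_le_card (Finset.filter_subset _ _)
        _ = 1 := by rw [H.hF0]; simp
  | succ n ih =>
      intro hyp
      apply Finset.card_le_one.2
      intro p hp p' hp'
      obtain ⟨hpF, x, hx⟩ := mem_meetSet.1 hp
      obtain ⟨hpF', y, hy⟩ := mem_meetSet.1 hp'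
      obtain ⟨q, hq, hsub⟩ := H.parent_exists hpF
      obtain ⟨q', hq', hsub'⟩ := H.parent_exists hpF'
      have hqm : q ∈ meetSet F n u1 u2 := mem_meetSet.2 ⟨hq, ⟨x, ⟨hsub hx.1, hx.2⟩⟩⟩
      have hqm' : q' ∈ meetSet F n u1 u2 := mem_meetSet.2 ⟨hq', ⟨y, ⟨hsub' hy.1, hy.2⟩⟩⟩
      have hcard := ih (fun j hj => hyp j (hj.trans (Nat.lt_succ_self n)))
      have hqq : q = q' := Finset.card_le_one.1 hcard q hqm q' hqm'
      subst hqq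
      by_contra hne
      have hgap := H.hgap n q hq p hpF p' hpF' hne hsub hsub' x hx.1 y hy.1
      have hlt := hyp n (Nat.lt_succ_self n) q hqm
      have h1 := hx.2
      have h2 := hy.2
      rw [Set.mem_Icc] at h1 h2
      have : |x - y| ≤ u2 - u1 := abs_sub_le_iff.2 ⟨by linarith, by linarith⟩
      linarith


open Classical in
lemma main_bound (n : ℕ) (u1 u2 : ℝ) (hu : u1 ≤ u2) :
    ∑ p ∈ descSet F n u1 u2, mass F n p ≤ (2 / c ^ δ + 1) * (u2 - u1) ^ δ := by
  obtain ⟨d, hddef⟩ : ∃ d : ℝ, d = u2 - u1 := ⟨u2 - u1, rfl⟩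
  rw [← hddef]
  have hd0 : 0 ≤ d := by rw [hddef]; linarith
  have hdδ : 0 ≤ d ^ δ := Real.rpow_nonneg hd0 δ
  have hcδ : 0 < c ^ δ := Real.rpow_pos_of_pos H.hc δ
  have hA : 1 ≤ 2 / c ^ δ + 1 := by
    have : 0 ≤ 2 / c ^ δ := by positivity
    linarith
  have hA0 : 0 ≤ 2 / c ^ δ + 1 := by linarith
  by_cases hcase : ∀ j, j < n → ∀ q ∈ meetSet F j u1 u2,
      u2 - u1 < c * (q.2 - q.1) / (mcard F j q : ℝ)
  · -- chain case: at most one level-`n` interval meets `[u1, u2]`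
    have hcard : (meetSet F n u1 u2).card ≤ 1 := H.chain u1 u2 n hcase
    have hsub : descSet F n u1 u2 ⊆ meetSet F n u1 u2 := by
      intro p hp
      obtain ⟨hpF, hpsub⟩ := mem_descSet.1 hp
      exact mem_meetSet.2 ⟨hpF, (H.icc_ne hpF).mono (Set.subset_inter (le_refl _) hpsub)⟩
    rcases Finset.eq_empty_or_nonempty (descSet F n u1 u2) with he | ⟨p, hp⟩
    · rw [he, Finset.sum_empty]
      positivity
    · have heq : descSet F n u1 u2 = {p} := by
        apply Finset.eq_singleton_iff_unique_mem.2
        refine ⟨hp, fun q hq => ?_⟩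
        exact Finset.card_le_one.1 hcard q (hsub hq) p (hsub hp)
      rw [heq, Finset.sum_singleton]
      obtain ⟨hpF, hpsub⟩ := mem_descSet.1 hp
      have h1 := hpsub (Set.left_mem_Icc.2 (H.hlt n p hpF).le)
      have h2 := hpsub (Set.right_mem_Icc.2 (H.hlt n p hpF).le)
      rw [Set.mem_Icc] at h1 h2
      calc mass F n p ≤ (p.2 - p.1) ^ δ := H.mass_le n p hpF
        _ ≤ d ^ δ := Real.rpow_le_rpow (by linarith [H.hlt n p hpF]) (by rw [hddef]; linarith) H.hδ0
        _ ≤ (2 / c ^ δ + 1) * d ^ δ := le_mul_of_one_le_left hdδ hA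
  · -- stopping-time case
    push_neg at hcase
    have hex : ∃ j, j < n ∧ ∃ q ∈ meetSet F j u1 u2,
        c * (q.2 - q.1) / (mcard F j q : ℝ) ≤ u2 - u1 := by
      obtain ⟨j, hj, q, hq, hle⟩ := hcase
      exact ⟨j, hj, q, hq, hle⟩
    set k := Nat.find hex with hkdef
    obtain ⟨hkn, q₀, hq₀m, hgled⟩ := Nat.find_spec hex
    have hq₀F : q₀ ∈ F k := (mem_meetSet.1 hq₀m).1
    set L := q₀.2 - q₀.1 with hLdef
    set m := (mcard F k q₀ : ℝ) with hmdef
    set g := c * L / m with hgdef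
    have hL : 0 < L := H.len_pos hq₀F
    have hm2 : (2 : ℝ) ≤ m := by rw [hmdef]; exact_mod_cast H.hm k q₀ hq₀F
    have hm0 : (0 : ℝ) < m := by linarith
    have hg : 0 < g := by rw [hgdef]; exact div_pos (mul_pos H.hc hL) hm0
    have hgd : g ≤ d := by rw [hddef]; exact hgled
    have hd : 0 < d := lt_of_lt_of_le hg hgd
    -- minimality: below level `k` all gaps are large
    have hkn' : k < n := hkn
    have hmin : ∀ j, j < k → ∀ q ∈ meetSet F j u1 u2,
        u2 - u1 < c * (q.2 - q.1) / (mcard F j q : ℝ) := by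
      intro j hj q hq
      have hnm := Nat.find_min hex hj
      push_neg at hnm
      exact hnm (hj.trans hkn') q hq
    have hchaink : (meetSet F k u1 u2).card ≤ 1 := H.chain u1 u2 k hmin
    have huniq : ∀ q' ∈ meetSet F k u1 u2, q' = q₀ :=
      fun q' hq' => Finset.card_le_one.1 hchaink q' hq' q₀ hq₀m
    -- the relevant children of q₀
    set B := (childs F k q₀).filter (fun r => (Set.Icc r.1 r.2 ∩ Set.Icc u1 u2).Nonempty)
      with hBdef
    have hBsub : ∀ r ∈ B, r ∈ F (k + 1) ∧ Set.Icc r.1 r.2 ⊆ Set.Icc q₀.1 q₀.2 ∧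
        (Set.Icc r.1 r.2 ∩ Set.Icc u1 u2).Nonempty := by
      intro r hr
      rw [hBdef, Finset.mem_filter] at hr
      exact ⟨(mem_childs.1 hr.1).1, (mem_childs.1 hr.1).2, hr.2⟩
    -- step 1: every level-n interval inside [u1,u2] descends from a member of B
    have hstep1 : descSet F n u1 u2 ⊆ B.biUnion (fun r => descSet F n r.1 r.2) := by
      intro p hp
      obtain ⟨hpF, hpsub⟩ := mem_descSet.1 hp
      obtain ⟨t, hnt⟩ : ∃ t, n = (k + 1) + t := ⟨n - (k + 1), by omega⟩
      obtain ⟨r, hrF, hrsub⟩ := H.anc t (k + 1) p (by rw [← hnt]; exact hpF)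
      obtain ⟨q', hq'F, hq'sub⟩ := H.parent_exists hrF
      have hq'm : q' ∈ meetSet F k u1 u2 := by
        refine mem_meetSet.2 ⟨hq'F, (H.icc_ne hpF).mono ?_⟩
        exact Set.subset_inter (hrsub.trans hq'sub) hpsub
      have : q' = q₀ := huniq q' hq'm
      subst this
      refine Finset.mem_biUnion.2 ⟨r, ?_, mem_descSet.2 ⟨hpF, hrsub⟩⟩
      rw [hBdef, Finset.mem_filter]
      exact ⟨mem_childs.2 ⟨hrF, hq'sub⟩, (H.icc_ne hpF).mono
        (Set.subset_inter hrsub hpsub)⟩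
    -- step 2: regroup the sum
    have hdisjB : (↑B : Set (ℝ × ℝ)).PairwiseDisjoint (fun r => descSet F n r.1 r.2) := by
      intro a ha b hb hne
      rw [Function.onFun, Finset.disjoint_left]
      intro p hpa hpb
      rw [Finset.mem_coe] at ha hb
      exact hne (H.parent_unique (H.icc_ne (mem_descSet.1 hpa).1)
        (hBsub a ha).1 (hBsub b hb).1 (mem_descSet.1 hpa).2 (mem_descSet.1 hpb).2)
    have hstep2 : ∑ p ∈ descSet F n u1 u2, mass F n p
        ≤ (B.card : ℝ) * (mass F k q₀ / m) := by
      have h1 : ∑ p ∈ descSet F n u1 u2, mass F n p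
          ≤ ∑ p ∈ B.biUnion (fun r => descSet F n r.1 r.2), mass F n p :=
        Finset.sum_le_sum_of_subset_of_nonneg hstep1 (fun p _ _ => mass_nonneg n p)
      rw [Finset.sum_biUnion hdisjB] at h1
      have h2 : ∀ r ∈ B, ∑ p ∈ descSet F n r.1 r.2, mass F n p = mass F k q₀ / m := by
        intro r hr
        rw [H.sum_desc' (by omega : 1 ≤ k + 1) (by omega : k + 1 ≤ n) (hBsub r hr).1]
        exact H.mass_succ (hBsub r hr).1 hq₀F (hBsub r hr).2.1
      rw [Finset.sum_congr rfl h2, Finset.sum_const, nsmul_eq_mul] at h1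
      exact h1
    have hmassq : mass F k q₀ ≤ L ^ δ := H.mass_le k q₀ hq₀F
    have hmass0 : 0 ≤ mass F k q₀ := mass_nonneg k q₀
    have hLδ : 0 ≤ L ^ δ := Real.rpow_nonneg hL.le δ
    -- step 3: counting the members of B
    have hstep3 : (B.card : ℝ) * g ≤ d + g := by
      rw [hddef]
      set x : ℝ × ℝ → ℝ := fun r =>
        if h : (Set.Icc r.1 r.2 ∩ Set.Icc u1 u2).Nonempty then h.choose else 0 with hxdef
      have hxmem : ∀ r ∈ B, x r ∈ Set.Icc r.1 r.2 ∩ Set.Icc u1 u2 := by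
        intro r hr
        have h := (hBsub r hr).2.2
        rw [hxdef]
        simp only [dif_pos h]
        exact h.choose_spec
      apply card_mul_gap_le B x g u1 u2 hg hu
      · intro a ha b hb hne
        have := H.hgap k q₀ hq₀F a (hBsub a ha).1 b (hBsub b hb).1 hne
          (hBsub a ha).2.1 (hBsub b hb).2.1 (x a) (hxmem a ha).1 (x b) (hxmem b hb).1
        rw [← hLdef, ← hmdef, ← hgdef] at this
        exact this
      · exact fun a ha => (hxmem a ha).2
    rcases le_or_gt (c * L) d with hcL | hcL
    · -- (a) the stopped interval is small compared to d
      have hBm : (B.card : ℝ) ≤ m := by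
        rw [hmdef]
        exact_mod_cast Finset.card_le_card (Finset.filter_subset _ _)
      calc ∑ p ∈ descSet F n u1 u2, mass F n p
          ≤ (B.card : ℝ) * (mass F k q₀ / m) := hstep2
        _ ≤ m * (mass F k q₀ / m) :=
            mul_le_mul_of_nonneg_right hBm (by positivity)
        _ = mass F k q₀ := by field_simp
        _ ≤ L ^ δ := hmassq
        _ ≤ (d / c) ^ δ := Real.rpow_le_rpow hL.le (by rw [le_div_iff₀ H.hc]; linarith) H.hδ0
        _ = d ^ δ / c ^ δ := Real.div_rpow hd0 H.hc.le δ
        _ ≤ (2 / c ^ δ + 1) * d ^ δ := by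
            have h1 : (c ^ δ)⁻¹ ≤ 2 / c ^ δ + 1 := by
              rw [inv_eq_one_div]
              have h2 : (1:ℝ) / c ^ δ ≤ 2 / c ^ δ := by
                rw [div_le_div_iff₀ hcδ hcδ]; nlinarith
              linarith
            calc d ^ δ / c ^ δ = (c ^ δ)⁻¹ * d ^ δ := by ring
              _ ≤ (2 / c ^ δ + 1) * d ^ δ := mul_le_mul_of_nonneg_right h1 hdδ
    · -- (b) the stopped interval is large compared to d
      have hcard2 : (B.card : ℝ) * g ≤ 2 * d := by linarith
      have hBle : (B.card : ℝ) ≤ 2 * d / g := by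
        rw [le_div_iff₀ hg]; linarith
      have hgm : g * m = c * L := by rw [hgdef]; field_simp
      have hLd : d / c < L := by rw [div_lt_iff₀ H.hc, mul_comm]; exact hcL
      have hdc : 0 < d / c := div_pos hd H.hc
      calc ∑ p ∈ descSet F n u1 u2, mass F n p
          ≤ (B.card : ℝ) * (mass F k q₀ / m) := hstep2
        _ ≤ (2 * d / g) * (mass F k q₀ / m) :=
            mul_le_mul_of_nonneg_right hBle (div_nonneg hmass0 hm0.le)
        _ = 2 * d * mass F k q₀ / (g * m) := by field_simp; try ring
        _ = 2 * d * mass F k q₀ / (c * L) := by rw [hgm]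
        _ ≤ 2 * d * (L ^ δ) / (c * L) := by
            apply (div_le_div_iff_of_pos_right (mul_pos H.hc hL)).2
            exact mul_le_mul_of_nonneg_left hmassq (by linarith)
        _ = (2 / c) * d * (L ^ (δ - 1)) := by
            rw [Real.rpow_sub hL δ 1, Real.rpow_one]
            field_simp
            try ring
        _ ≤ (2 / c) * d * ((d / c) ^ (δ - 1)) := by
            apply mul_le_mul_of_nonneg_left
              (Real.rpow_le_rpow_of_nonpos hdc hLd.le (by linarith [H.hδ1]))
              (mul_nonneg (div_nonneg (by norm_num) H.hc.le) hd.le)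
        _ = 2 * d ^ δ / c ^ δ := by
            rw [Real.div_rpow hd0 H.hc.le, Real.rpow_sub hd δ 1, Real.rpow_sub H.hc δ 1,
              Real.rpow_one, Real.rpow_one]
            field_simp [hd.ne', H.hc.ne', hcδ.ne']
        _ ≤ (2 / c ^ δ + 1) * d ^ δ := by
            have heq : (2 / c ^ δ + 1) * d ^ δ = 2 * d ^ δ / c ^ δ + d ^ δ := by ring
            rw [heq]; linarith

/-- Every interval of the construction contains a point of the limit set. -/
lemma exists_point {n : ℕ} (hn : 1 ≤ n) {p : ℝ × ℝ} (hp : p ∈ F n) :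
    ∃ x ∈ Set.Icc p.1 p.2, x ∈ Set.Ioo (0 : ℝ) 1 ∧
      ∀ k, x ∈ ⋃ r ∈ F (k + 1), Set.Icc r.1 r.2 := by
  have hchoice : ∀ (k : ℕ) (q : ℝ × ℝ), ∃ r : ℝ × ℝ,
      q ∈ F k → (r ∈ F (k + 1) ∧ Set.Icc r.1 r.2 ⊆ Set.Icc q.1 q.2) := by
    intro k q
    by_cases h : q ∈ F k
    · have hne : (childs F k q).Nonempty := by
        rw [← Finset.card_pos, show (childs F k q).card = mcard F k q from rfl]
        have := H.hm k q h
        omega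
      obtain ⟨r, hr⟩ := hne
      exact ⟨r, fun _ => ⟨(mem_childs.1 hr).1, (mem_childs.1 hr).2⟩⟩
    · exact ⟨q, fun h' => absurd h' h⟩
  choose ch hch using hchoice
  set seq : ℕ → ℝ × ℝ := fun t => Nat.rec p (fun t r => ch (n + t) r) t with hseqdef
  have hseq0 : seq 0 = p := rfl
  have hseqS : ∀ t, seq (t + 1) = ch (n + t) (seq t) := fun t => rfl
  have hseqF : ∀ t, seq t ∈ F (n + t) := by
    intro t
    induction t with
    | zero => exact hp
    | succ t ih =>
        rw [hseqS]
        exact (hch (n + t) (seq t) ih).1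
  have hsub : ∀ t, Set.Icc (seq (t + 1)).1 (seq (t + 1)).2 ⊆ Set.Icc (seq t).1 (seq t).2 := by
    intro t
    rw [hseqS]
    exact (hch (n + t) (seq t) (hseqF t)).2
  have hmono : ∀ s t, s ≤ t → Set.Icc (seq t).1 (seq t).2 ⊆ Set.Icc (seq s).1 (seq s).2 := by
    intro s t hst
    induction t with
    | zero => rw [Nat.le_zero.1 hst]
    | succ t ih =>
        rcases Nat.lt_or_ge s (t + 1) with h | h
        · exact (hsub t).trans (ih (by omega))
        · rw [le_antisymm hst h]
  have hnd : ∀ t, (seq t).1 ≤ (seq t).2 := fun t => (H.hlt _ _ (hseqF t)).le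
  have hlmem : ∀ t, (seq t).1 ∈ Set.Icc (seq t).1 (seq t).2 :=
    fun t => Set.left_mem_Icc.2 (hnd t)
  set x := sSup (Set.range fun t => (seq t).1) with hxdef
  have hbdd : BddAbove (Set.range fun t => (seq t).1) := by
    refine ⟨p.2, ?_⟩
    rintro y ⟨t, rfl⟩
    have := hmono 0 t (Nat.zero_le t) (hlmem t)
    rw [hseq0] at this
    exact this.2
  have hxmem : ∀ t, x ∈ Set.Icc (seq t).1 (seq t).2 := by
    intro t
    constructor
    · exact le_csSup hbdd ⟨t, rfl⟩
    · apply csSup_le (Set.range_nonempty _)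
      rintro y ⟨s, rfl⟩
      have h1 := hmono s (max s t) (le_max_left s t) (hlmem (max s t))
      have h2 := hmono t (max s t) (le_max_right s t) (hlmem (max s t))
      exact le_trans h1.1 h2.2
  have hxp : x ∈ Set.Icc p.1 p.2 := by rw [← hseq0]; exact hxmem 0
  have hxU : ∀ k, x ∈ ⋃ r ∈ F (k + 1), Set.Icc r.1 r.2 := by
    intro k
    rcases le_or_gt n (k + 1) with h | h
    · obtain ⟨t, ht⟩ : ∃ t, k + 1 = n + t := ⟨k + 1 - n, by omega⟩
      refine Set.mem_biUnion (show seq t ∈ F (k + 1) by rw [ht]; exact hseqF t) ?_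
      exact hxmem t
    · obtain ⟨s, hs⟩ : ∃ s, n = (k + 1) + s := ⟨n - (k + 1), by omega⟩
      obtain ⟨a, ha, hsuba⟩ := H.anc s (k + 1) p (by rw [← hs]; exact hp)
      exact Set.mem_biUnion ha (hsuba hxp)
  refine ⟨x, hxp, ?_, hxU⟩
  have h0 := hxU 0
  simp only [Set.mem_iUnion] at h0
  obtain ⟨r, hr, hxr⟩ := h0
  exact H.hsub1 r hr hxr

end Good

/-- Overcounting: a sum over a subset of a `biUnion` is at most the sum of the sums. -/
lemma sum_le_sum_biUnion {α β : Type*} [DecidableEq α] (I : Finset β) (g : β → Finset α)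
    (f : α → ℝ) (hf : ∀ a, 0 ≤ f a) (s : Finset α) (hs : s ⊆ I.biUnion g) :
    ∑ a ∈ s, f a ≤ ∑ i ∈ I, ∑ a ∈ g i, f a := by
  calc ∑ a ∈ s, f a ≤ ∑ a ∈ I.biUnion g, f a :=
        Finset.sum_le_sum_of_subset_of_nonneg hs (fun a _ _ => hf a)
    _ ≤ ∑ i ∈ I, ∑ a ∈ g i, f a := by
        clear hs
        induction I using Finset.induction with
        | empty => simp
        | insert b I' hnotmem ih =>
            rw [Finset.biUnion_insert, Finset.sum_insert hnotmem]
            calc ∑ a ∈ g b ∪ I'.biUnion g, f a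
                ≤ ∑ a ∈ g b, f a + ∑ a ∈ I'.biUnion g, f a := by
                  rw [← Finset.sum_union_inter]
                  have : 0 ≤ ∑ a ∈ g b ∩ I'.biUnion g, f a :=
                    Finset.sum_nonneg fun a _ => hf a
                  linarith
              _ ≤ ∑ a ∈ g b, f a + ∑ i ∈ I', ∑ a ∈ g i, f a := by linarith [ih]

/-- real version of subadditivity of `rpow` for exponents in `[0,1]` -/
lemma real_rpow_add_le {x y p : ℝ} (hx : 0 ≤ x) (hy : 0 ≤ y) (h0 : 0 ≤ p) (h1 : p ≤ 1) :
    (x + y) ^ p ≤ x ^ p + y ^ p := by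
  have h := NNReal.rpow_add_le_add_rpow x.toNNReal y.toNNReal h0 h1
  have h2 := NNReal.coe_le_coe.2 h
  push_cast [NNReal.coe_rpow] at h2
  rwa [Real.coe_toNNReal x hx, Real.coe_toNNReal y hy] at h2

namespace Good

variable {F : ℕ → Finset (ℝ × ℝ)} {δ c : ℝ} (H : Good F δ c)
include H

lemma E_closed_eq :
    Set.Ioo (0 : ℝ) 1 ∩ (⋂ k, ⋃ p ∈ F (k + 1), Set.Icc p.1 p.2)
      = ⋂ k, ⋃ p ∈ F (k + 1), Set.Icc p.1 p.2 := by
  apply Set.inter_eq_right.2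
  intro x hx
  have h0 := Set.mem_iInter.1 hx 0
  simp only [Set.mem_iUnion] at h0
  obtain ⟨p, hp, hxp⟩ := h0
  exact H.hsub1 p hp hxp

lemma E_compact : IsCompact (⋂ k, ⋃ p ∈ F (k + 1), Set.Icc p.1 p.2) := by
  have hclosed : IsClosed (⋂ k, ⋃ p ∈ F (k + 1), Set.Icc (α := ℝ) p.1 p.2) := by
    apply isClosed_iInter
    intro k
    apply Set.Finite.isClosed_biUnion (F (k + 1)).finite_toSet
    exact fun p _ => isClosed_Icc
  apply IsCompact.of_isClosed_subset (isCompact_Icc : IsCompact (Set.Icc (0:ℝ) 1)) hclosed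
  intro x hx
  have h0 := Set.mem_iInter.1 hx 0
  simp only [Set.mem_iUnion] at h0
  obtain ⟨p, hp, hxp⟩ := h0
  exact Set.Ioo_subset_Icc_self (H.hsub1 p hp hxp)

lemma measure_lb (hδpos : 0 < δ) :
    ENNReal.ofReal (1 / (2 * (2 / c ^ δ + 1)))
      ≤ μH[δ] (⋂ k, ⋃ p ∈ F (k + 1), Set.Icc p.1 p.2) := by
  classical
  set E := ⋂ k, ⋃ p ∈ F (k + 1), Set.Icc (α := ℝ) p.1 p.2 with hEdef
  have hEc : IsCompact E := H.E_compact
  set A := 2 / c ^ δ + 1 with hAdef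
  have hcδ : 0 < c ^ δ := Real.rpow_pos_of_pos H.hc δ
  have hA1 : 1 ≤ A := by
    rw [hAdef]
    have : 0 ≤ 2 / c ^ δ := by positivity
    linarith
  have hA0 : 0 < A := by linarith
  set b := 1 / (2 * A) with hbdef
  have hb0 : 0 < b := by rw [hbdef]; positivity
  clear_value A b
  rw [MeasureTheory.Measure.hausdorffMeasure_apply]
  refine le_iSup₂_of_le 1 one_pos (le_iInf fun t => le_iInf fun hcov => le_iInf fun hdiam => ?_)
  have hbnd : ∀ n, Bornology.IsBounded (t n) := fun n =>
    Metric.isBounded_iff_ediam_ne_top.2 ((hdiam n).trans_lt ENNReal.one_lt_top).ne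
  set η : ℕ → ℝ := fun n => (b / 2 / 2 ^ n) ^ δ⁻¹ with hηdef
  have hb22 : ∀ n : ℕ, 0 < b / 2 / 2 ^ n := fun n =>
    div_pos (div_pos hb0 two_pos) (pow_pos two_pos n)
  have hη0 : ∀ n, 0 < η n := fun n => Real.rpow_pos_of_pos (hb22 n) _
  have hηδ : ∀ n, (η n) ^ δ = b / 2 / 2 ^ n := fun n =>
    Real.rpow_inv_rpow (hb22 n).le hδpos.ne'
  set J : ℕ → ℝ × ℝ := fun n =>
    if (t n).Nonempty then (sInf (t n) - η n / 2, sSup (t n) + η n / 2)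
    else ((1 : ℝ), (0 : ℝ)) with hJdef
  have hJlen : ∀ n, (t n).Nonempty → (J n).2 - (J n).1 = Metric.diam (t n) + η n := by
    intro n hn
    rw [hJdef]
    simp only [if_pos hn]
    rw [Real.diam_eq (hbnd n)]
    ring
  have htJ : ∀ n, t n ⊆ Set.Ioo (J n).1 (J n).2 := by
    intro n x hx
    have hn : (t n).Nonempty := ⟨x, hx⟩
    have hJn : J n = (sInf (t n) - η n / 2, sSup (t n) + η n / 2) := by
      rw [hJdef]; simp only [if_pos hn]
    rw [hJn, Set.mem_Ioo]
    have h1 := csInf_le (hbnd n).bddBelow hx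
    have h2 := le_csSup (hbnd n).bddAbove hx
    have h3 := hη0 n
    exact ⟨by show sInf (t n) - η n / 2 < x; linarith,
      by show x < sSup (t n) + η n / 2; linarith⟩
  obtain ⟨I, hI⟩ := hEc.elim_finite_subcover (fun n => Set.Ioo (J n).1 (J n).2)
    (fun n => isOpen_Ioo) (hcov.trans (Set.iUnion_mono htJ))
  have hIcov : E ⊆ ⋃ i : I, Set.Ioo (J (i : ℕ)).1 (J (i : ℕ)).2 := by
    intro x hx
    have := hI hx
    simp only [Set.mem_iUnion] at this ⊢
    obtain ⟨i, hi, h⟩ := this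
    exact ⟨⟨i, hi⟩, h⟩
  obtain ⟨lam, hlam0, hlam⟩ := lebesgue_number_lemma_of_metric hEc (fun _ => isOpen_Ioo) hIcov
  obtain ⟨n₀, hn₀⟩ := exists_pow_lt_of_lt_one hlam0 (show 1 - c / 2 < 1 by linarith [H.hc])
  set N := n₀ + 1 with hNdef
  have hN1 : 1 ≤ N := by omega
  have hNlam : (1 - c / 2) ^ N < lam :=
    lt_of_le_of_lt (pow_le_pow_of_le_one H.half_pos.le (by linarith [H.hc]) (by omega)) hn₀
  have hassign : ∀ p ∈ F N, ∃ i ∈ I, p ∈ descSet F N (J i).1 (J i).2 := by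
    intro p hp
    obtain ⟨x, hxp, hx01, hxU⟩ := H.exists_point hN1 hp
    have hxE : x ∈ E := by rw [hEdef]; exact Set.mem_iInter.2 hxU
    obtain ⟨⟨i, hi⟩, hball⟩ := hlam x hxE
    refine ⟨i, hi, mem_descSet.2 ⟨hp, ?_⟩⟩
    intro y hy
    have hlen := H.len_le N p hp
    have hyb : y ∈ Metric.ball x lam := by
      rw [Metric.mem_ball, Real.dist_eq]
      have h1 := hxp
      rw [Set.mem_Icc] at h1 hy
      have : |y - x| ≤ p.2 - p.1 := abs_sub_le_iff.2 ⟨by linarith, by linarith⟩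
      linarith
    exact Set.Ioo_subset_Icc_self (hball hyb)
  have hFsub : F N ⊆ I.biUnion (fun i => descSet F N (J i).1 (J i).2) := by
    intro p hp
    obtain ⟨i, hi, h⟩ := hassign p hp
    exact Finset.mem_biUnion.2 ⟨i, hi, h⟩
  have hper : ∀ i ∈ I, ∑ p ∈ descSet F N (J i).1 (J i).2, mass F N p
      ≤ A * (Metric.diam (t i) + η i) ^ δ := by
    intro i _
    by_cases hn : (t i).Nonempty
    · have hle : (J i).1 ≤ (J i).2 := by
        have h1 : sInf (t i) ≤ sSup (t i) := by
          obtain ⟨x, hx⟩ := hn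
          exact le_trans (csInf_le (hbnd i).bddBelow hx) (le_csSup (hbnd i).bddAbove hx)
        have hJn : J i = (sInf (t i) - η i / 2, sSup (t i) + η i / 2) := by
          rw [hJdef]; simp only [if_pos hn]
        rw [hJn]
        show sInf (t i) - η i / 2 ≤ sSup (t i) + η i / 2
        linarith [hη0 i]
      have hmb := H.main_bound N (J i).1 (J i).2 hle
      rwa [hJlen i hn, ← hAdef] at hmb
    · have hempty : descSet F N (J i).1 (J i).2 = ∅ := by
        apply Finset.eq_empty_iff_forall_notMem.2
        intro p hp
        obtain ⟨z, hz⟩ := H.icc_ne (mem_descSet.1 hp).1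
        have h2 := (mem_descSet.1 hp).2 hz
        rw [hJdef] at h2
        simp only [if_neg hn] at h2
        rw [Set.mem_Icc] at h2
        linarith [h2.1, h2.2]
      rw [hempty, Finset.sum_empty]
      have hnn : 0 ≤ Metric.diam (t i) + η i := by
        linarith [Metric.diam_nonneg (s := t i), hη0 i]
      exact mul_nonneg hA0.le (Real.rpow_nonneg hnn δ)
  have hsum1 : (1 : ℝ) ≤ ∑ i ∈ I, A * (Metric.diam (t i) + η i) ^ δ := by
    calc (1 : ℝ) = ∑ p ∈ F N, mass F N p := (H.sum_mass N).symm
      _ ≤ ∑ i ∈ I, ∑ p ∈ descSet F N (J i).1 (J i).2, mass F N p :=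
          sum_le_sum_biUnion I _ _ (fun a => mass_nonneg N a) _ hFsub
      _ ≤ ∑ i ∈ I, A * (Metric.diam (t i) + η i) ^ δ := Finset.sum_le_sum hper
  have hgeo : ∑ i ∈ I, (η i) ^ δ ≤ b := by
    calc ∑ i ∈ I, (η i) ^ δ = ∑ i ∈ I, b / 2 / 2 ^ i :=
          Finset.sum_congr rfl (fun i _ => hηδ i)
      _ ≤ ∑' n, b / 2 / 2 ^ n :=
          Summable.sum_le_tsum I (fun i _ => (hb22 i).le) (summable_geometric_two' b)
      _ = b := tsum_geometric_two' b
  have hsum2 : ∑ i ∈ I, A * (Metric.diam (t i) + η i) ^ δ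
      ≤ A * (∑ i ∈ I, (Metric.diam (t i)) ^ δ) + A * b := by
    have hsplit : ∀ i ∈ I, A * (Metric.diam (t i) + η i) ^ δ
        ≤ A * ((Metric.diam (t i)) ^ δ + (η i) ^ δ) :=
      fun i _ => mul_le_mul_of_nonneg_left
        (real_rpow_add_le Metric.diam_nonneg (hη0 i).le H.hδ0 H.hδ1) hA0.le
    calc ∑ i ∈ I, A * (Metric.diam (t i) + η i) ^ δ
        ≤ ∑ i ∈ I, A * ((Metric.diam (t i)) ^ δ + (η i) ^ δ) := Finset.sum_le_sum hsplit
      _ = A * (∑ i ∈ I, (Metric.diam (t i)) ^ δ) + A * (∑ i ∈ I, (η i) ^ δ) := by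
          rw [← Finset.mul_sum, Finset.sum_add_distrib, mul_add]
      _ ≤ A * (∑ i ∈ I, (Metric.diam (t i)) ^ δ) + A * b := by
          have := mul_le_mul_of_nonneg_left hgeo hA0.le
          linarith
  have hfinal : b ≤ ∑ i ∈ I, (Metric.diam (t i)) ^ δ := by
    have hAb : A * b = 1 / 2 := by rw [hbdef]; field_simp [hA0.ne']
    have h2 : (1 : ℝ) / 2 ≤ A * ∑ i ∈ I, (Metric.diam (t i)) ^ δ := by
      have := hsum1.trans hsum2
      linarith
    rw [hbdef, div_le_iff₀ (by linarith : (0:ℝ) < 2 * A)]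
    nlinarith [h2]
  calc ENNReal.ofReal b ≤ ENNReal.ofReal (∑ i ∈ I, (Metric.diam (t i)) ^ δ) :=
        ENNReal.ofReal_le_ofReal hfinal
    _ = ∑ i ∈ I, ENNReal.ofReal ((Metric.diam (t i)) ^ δ) :=
        ENNReal.ofReal_sum_of_nonneg (fun i _ => Real.rpow_nonneg Metric.diam_nonneg δ)
    _ ≤ ∑ i ∈ I, ⨆ (_ : (t i).Nonempty), EMetric.diam (t i) ^ δ := by
        apply Finset.sum_le_sum
        intro i _
        by_cases hn : (t i).Nonempty
        · rw [iSup_pos hn, ← ENNReal.ofReal_rpow_of_nonneg Metric.diam_nonneg H.hδ0,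
            Metric.diam, ENNReal.ofReal_toReal (hbnd i).ediam_ne_top]
          exact le_rfl
        · rw [Set.not_nonempty_iff_eq_empty.1 hn]
          simp [Real.zero_rpow hδpos.ne']
    _ ≤ ∑' n, ⨆ (_ : (t n).Nonempty), EMetric.diam (t n) ^ δ := ENNReal.sum_le_tsum I

end Good

open scoped Classical in
/-- Falconer-type dimension bound for a Cantor-like set in `(0,1)`.
`F k` is the finite family of (endpoints of) the disjoint closed intervals of level `k`,
with `F 0 = {(0,1)}` playing the role of `𝔼₀ = (0,1)`.  Assuming the gap condition (1)
and the counting condition (2), the Hausdorff dimension of the intersection is `≥ δ`. -/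
theorem stmt8 (F : ℕ → Finset (ℝ × ℝ)) (δ c : ℝ)
    (hδ : δ ∈ Set.Icc (0 : ℝ) 1) (hc : 0 < c)
    (hF0 : F 0 = {((0 : ℝ), (1 : ℝ))})
    -- the intervals are nondegenerate
    (hlt : ∀ k, ∀ p ∈ F k, p.1 < p.2)
    -- the intervals of each level `k ≥ 1` are mutually disjoint
    (hdisj : ∀ k, 1 ≤ k → ∀ p ∈ F k, ∀ q ∈ F k, p ≠ q →
      Disjoint (Set.Icc p.1 p.2) (Set.Icc q.1 q.2))
    -- the first level is contained in `𝔼₀ = (0,1)`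
    (hsub1 : ∀ p ∈ F 1, Set.Icc p.1 p.2 ⊆ Set.Ioo (0 : ℝ) 1)
    -- each level-(k+1) interval is contained in some level-k interval
    (hnest : ∀ k, 1 ≤ k → ∀ p ∈ F (k + 1), ∃ q ∈ F k,
      Set.Icc p.1 p.2 ⊆ Set.Icc q.1 q.2)
    -- each level-k interval contains at least two level-(k+1) intervals
    (hm : ∀ k, ∀ q ∈ F k,
      2 ≤ ((F (k + 1)).filter fun p => Set.Icc p.1 p.2 ⊆ Set.Icc q.1 q.2).card)
    -- (1) gap condition: `ε_{k+1}(E_k) ≥ c·|E_k| / m_{k+1}(E_k)`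
    (hgap : ∀ k, ∀ q ∈ F k, ∀ p ∈ F (k + 1), ∀ p' ∈ F (k + 1), p ≠ p' →
      Set.Icc p.1 p.2 ⊆ Set.Icc q.1 q.2 → Set.Icc p'.1 p'.2 ⊆ Set.Icc q.1 q.2 →
      ∀ x ∈ Set.Icc p.1 p.2, ∀ y ∈ Set.Icc p'.1 p'.2,
        c * (q.2 - q.1) /
            (((F (k + 1)).filter fun r => Set.Icc r.1 r.2 ⊆ Set.Icc q.1 q.2).card : ℝ) ≤
          |x - y|)
    -- (2) counting condition: `|E_{k+1}|^δ ≥ |E_k|^δ / m_{k+1}(E_k)`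
    (hlen : ∀ k, ∀ q ∈ F k, ∀ p ∈ F (k + 1), Set.Icc p.1 p.2 ⊆ Set.Icc q.1 q.2 →
      (q.2 - q.1) ^ δ /
          (((F (k + 1)).filter fun r => Set.Icc r.1 r.2 ⊆ Set.Icc q.1 q.2).card : ℝ) ≤
        (p.2 - p.1) ^ δ) :
    ENNReal.ofReal δ ≤
      dimH (Set.Ioo (0 : ℝ) 1 ∩ ⋂ k, ⋃ p ∈ F (k + 1), Set.Icc p.1 p.2) := by
  have H : Good F δ c :=
    ⟨hδ.1, hδ.2, hc, hF0, hlt, hdisj, hsub1, hnest, hm, hgap, hlen⟩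
  rcases eq_or_lt_of_le hδ.1 with h0 | hδpos
  · rw [← h0]
    simp
  · rw [H.E_closed_eq]
    have hμ := H.measure_lb hδpos
    have hb0 : (0 : ℝ) < 1 / (2 * (2 / c ^ δ + 1)) := by
      have hcδ : 0 < c ^ δ := Real.rpow_pos_of_pos hc δ
      positivity
    have hne : μH[δ] (⋂ k, ⋃ p ∈ F (k + 1), Set.Icc p.1 p.2) ≠ 0 := by
      intro hzero
      rw [hzero] at hμ
      exact absurd (lt_of_lt_of_le (ENNReal.ofReal_pos.2 hb0) hμ) (lt_irrefl 0)
    have hd := le_dimH_of_hausdorffMeasure_ne_zero (d := δ.toNNReal)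
      (s := ⋂ k, ⋃ p ∈ F (k + 1), Set.Icc p.1 p.2)
      (by rw [Real.coe_toNNReal δ hδ.1]; exact hne)
    rwa [show ENNReal.ofReal δ = ((δ.toNNReal : NNReal) : ENNReal) from rfl]
end

section
/- Let α ∈ (0,1) be irrational with convergents p_n/q_n, η > 1, and C > 0. If there are infinitely many n such that a_{n+1} ≥ q_n^{η−1}, and for all sufficiently large n one has a_{n+1} ≤ C·q_n^{η−1}, then the diophantine type of α equals η, i.e., w(α) = η. -/
/-- The Gauss map `G(x) = {1/x}`. -/
noncomputable def gaussMap (x : ℝ) : ℝ := Int.fract x⁻¹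

/-- `pquot α n` is the `(n+1)`-st partial quotient `a_{n+1}` of `α` (0-based indexing). -/
noncomputable def pquot (α : ℝ) (n : ℕ) : ℕ := ⌊(gaussMap^[n] α)⁻¹⌋₊

/-- `qden a (n+1)` is the denominator `q_n` of `[a 0, …, a (n-1)]`, with `qden a 0 = 0`. -/
def qden (a : ℕ → ℕ) : ℕ → ℕ
  | 0 => 0
  | 1 => 1
  | (n + 2) => a n * qden a (n + 1) + qden a n


/-- numerators -/
def pnum' (a : ℕ → ℕ) : ℕ → ℕ
  | 0 => 1
  | 1 => 0
  | (n + 2) => a n * pnum' a (n + 1) + pnum' a n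

open GenContFract

lemma st12_iter {α : ℝ} (hirr : Irrational α) (hα : α ∈ Set.Ioo (0:ℝ) 1) :
    ∀ n, Irrational (gaussMap^[n] α) ∧ gaussMap^[n] α ∈ Set.Ioo (0:ℝ) 1 := by
  intro n
  induction n with
  | zero => exact ⟨hirr, hα⟩
  | succ n ih =>
    obtain ⟨h1, h2⟩ := ih
    rw [Function.iterate_succ_apply']
    set x := gaussMap^[n] α
    have hxinv : Irrational x⁻¹ := h1.inv
    have hfr : Irrational (Int.fract x⁻¹) := by
      have := hxinv.sub_intCast ⌊x⁻¹⌋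
      rwa [Int.self_sub_floor] at this
    refine ⟨hfr, ⟨?_, Int.fract_lt_one _⟩⟩
    rcases (Int.fract_nonneg x⁻¹).lt_or_eq with h | h
    · exact h
    · exact absurd h.symm (by
        intro hz
        exact hfr (hz ▸ ⟨0, by norm_num⟩))

lemma st12_stream {α : ℝ} (hirr : Irrational α) (hα : α ∈ Set.Ioo (0:ℝ) 1) :
    ∀ n, ∃ ifp, IntFractPair.stream α n = some ifp ∧ ifp.fr = gaussMap^[n] α := by
  intro n
  induction n with
  | zero =>
    refine ⟨IntFractPair.of α, IntFractPair.stream_zero α, ?_⟩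
    simp only [IntFractPair.of, Function.iterate_zero_apply]
    exact Int.fract_eq_self.mpr ⟨hα.1.le, hα.2⟩
  | succ n ih =>
    obtain ⟨ifp, hs, hfr⟩ := ih
    have hne : ifp.fr ≠ 0 := by
      rw [hfr]
      exact (st12_iter hirr hα n).1.ne_int 0 ∘ (by simpa using ·)
    refine ⟨IntFractPair.of ifp.fr⁻¹, IntFractPair.stream_succ_of_some hs hne, ?_⟩
    simp only [IntFractPair.of, Function.iterate_succ_apply']
    rw [hfr]; rfl

lemma st12_pquot_pos {α : ℝ} (hirr : Irrational α) (hα : α ∈ Set.Ioo (0:ℝ) 1) (n : ℕ) :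
    1 ≤ pquot α n := by
  have h := (st12_iter hirr hα n).2
  have : (1:ℝ) ≤ (gaussMap^[n] α)⁻¹ := by
    rw [le_inv_comm₀ one_pos h.1]
    exact h.2.le.trans (by norm_num)
  exact Nat.le_floor (by exact_mod_cast this)

lemma st12_floor_eq {α : ℝ} (hirr : Irrational α) (hα : α ∈ Set.Ioo (0:ℝ) 1) (n : ℕ) :
    ((pquot α n : ℤ) : ℝ) = (⌊(gaussMap^[n] α)⁻¹⌋ : ℝ) := by
  have h := (st12_iter hirr hα n).2
  have h0 : (0:ℝ) ≤ (gaussMap^[n] α)⁻¹ := (inv_pos.mpr h.1).le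
  exact_mod_cast congrArg (fun z : ℤ => (z : ℝ)) (Int.natCast_floor_eq_floor h0)

lemma st12_s {α : ℝ} (hirr : Irrational α) (hα : α ∈ Set.Ioo (0:ℝ) 1) (n : ℕ) :
    (GenContFract.of α).s.get? n = some ⟨1, (pquot α n : ℝ)⟩ := by
  obtain ⟨ifp, hs, hfr⟩ := st12_stream hirr hα n
  have hne : ifp.fr ≠ 0 := by
    rw [hfr]
    intro hz
    exact (st12_iter hirr hα n).1 (hz ▸ ⟨0, by norm_num⟩)
  have := get?_of_eq_some_of_get?_intFractPair_stream_fr_ne_zero hs hne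
  rw [this]
  congr 1
  have : (IntFractPair.of ifp.fr⁻¹).b = ⌊(gaussMap^[n] α)⁻¹⌋ := by
    simp [IntFractPair.of, hfr]
  rw [this]
  exact congrArg _ (st12_floor_eq hirr hα n).symm

lemma st12_not_term {α : ℝ} (hirr : Irrational α) (hα : α ∈ Set.Ioo (0:ℝ) 1) (n : ℕ) :
    ¬ (GenContFract.of α).TerminatedAt n := by
  rw [GenContFract.terminatedAt_iff_s_none, st12_s hirr hα n]
  simp

lemma st12_conts {α : ℝ} (hirr : Irrational α) (hα : α ∈ Set.Ioo (0:ℝ) 1) :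
    ∀ m, ((GenContFract.of α).contsAux m).a = (pnum' (pquot α) m : ℝ) ∧
      ((GenContFract.of α).contsAux m).b = (qden (pquot α) m : ℝ) := by
  have key : ∀ m, (((GenContFract.of α).contsAux m).a = (pnum' (pquot α) m : ℝ) ∧
      ((GenContFract.of α).contsAux m).b = (qden (pquot α) m : ℝ)) ∧
      (((GenContFract.of α).contsAux (m+1)).a = (pnum' (pquot α) (m+1) : ℝ) ∧
      ((GenContFract.of α).contsAux (m+1)).b = (qden (pquot α) (m+1) : ℝ)) := by
    intro m
    induction m with
    | zero =>
      constructor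
      · constructor <;> simp [GenContFract.contsAux, pnum', qden]
      · constructor <;> simp [GenContFract.contsAux, pnum', qden, of_h_eq_floor,
          show ⌊α⌋ = 0 from Int.floor_eq_zero_iff.mpr ⟨hα.1.le, hα.2⟩]
    | succ m ih =>
      refine ⟨ih.2, ?_⟩
      have hrec : (GenContFract.of α).contsAux (m+2) =
          nextConts 1 (pquot α m : ℝ) ((GenContFract.of α).contsAux m)
            ((GenContFract.of α).contsAux (m+1)) := by
        simp [GenContFract.contsAux, st12_s hirr hα m]
      rw [hrec]
      simp only [nextConts, nextNum, nextDen, ih.1.1, ih.1.2, ih.2.1, ih.2.2]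
      constructor
      · show _ = ((pquot α m * pnum' (pquot α) (m+1) + pnum' (pquot α) m : ℕ) : ℝ)
        push_cast; ring
      · show _ = ((pquot α m * qden (pquot α) (m+1) + qden (pquot α) m : ℕ) : ℝ)
        push_cast; ring
  exact fun m => (key m).1

lemma st12_conv {α : ℝ} (hirr : Irrational α) (hα : α ∈ Set.Ioo (0:ℝ) 1) (n : ℕ) :
    (GenContFract.of α).convs n
      = (pnum' (pquot α) (n+1) : ℝ) / (qden (pquot α) (n+1) : ℝ) := by
  rw [GenContFract.conv_eq_conts_a_div_conts_b, GenContFract.nth_cont_eq_succ_nth_contAux,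
    (st12_conts hirr hα (n+1)).1, (st12_conts hirr hα (n+1)).2]

lemma st12_qden_rec (a : ℕ → ℕ) (n : ℕ) :
    qden a (n+2) = a n * qden a (n+1) + qden a n := rfl

lemma st12_qden_pos {a : ℕ → ℕ} (ha : ∀ n, 1 ≤ a n) : ∀ n, 1 ≤ qden a (n+1) := by
  intro n
  induction n with
  | zero => simp [qden]
  | succ n ih =>
    rw [st12_qden_rec]
    have := ha n
    nlinarith

lemma st12_qden_lt {a : ℕ → ℕ} (ha : ∀ n, 1 ≤ a n) {n : ℕ} (hn : 1 ≤ n) :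
    qden a (n+1) < qden a (n+2) := by
  obtain ⟨m, rfl⟩ : ∃ m, n = m + 1 := ⟨n - 1, by omega⟩
  rw [st12_qden_rec a (m+1)]
  have h1 := st12_qden_pos ha (m+1)
  have h2 := st12_qden_pos ha m
  have h3 := ha (m+1)
  nlinarith

lemma st12_qden_inj {a : ℕ → ℕ} (ha : ∀ n, 1 ≤ a n) {m n : ℕ} (hm : 1 ≤ m) (hn : 1 ≤ n)
    (h : qden a (m+1) = qden a (n+1)) : m = n := by
  have hsm : StrictMono (fun k => qden a (k+2)) := by
    apply strictMono_nat_of_lt_succ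
    intro k
    exact st12_qden_lt ha (Nat.le_add_left 1 k)
  obtain ⟨m', rfl⟩ := Nat.exists_eq_add_of_le hm
  obtain ⟨n', rfl⟩ := Nat.exists_eq_add_of_le hn
  have : m' = n' := hsm.injective (by
    simpa [Nat.add_comm 1 m', Nat.add_comm 1 n', Nat.add_assoc] using h)
  omega

lemma st12_coprime {α : ℝ} (hirr : Irrational α) (hα : α ∈ Set.Ioo (0:ℝ) 1) (n : ℕ) :
    IsCoprime ((pnum' (pquot α) (n+1) : ℤ)) ((qden (pquot α) (n+1) : ℤ)) := by
  have det := SimpContFract.determinant (s := SimpContFract.of α) (n := n)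
    (st12_not_term hirr hα n)
  simp only [GenContFract.num_eq_conts_a, GenContFract.den_eq_conts_b,
    GenContFract.nth_cont_eq_succ_nth_contAux] at det
  have hc := st12_conts hirr hα
  rw [show ((SimpContFract.of α) : GenContFract ℝ) = GenContFract.of α from rfl] at det
  rw [(hc (n+1)).1, (hc (n+1)).2, (hc (n+2)).1, (hc (n+2)).2] at det
  have detZ : (pnum' (pquot α) (n+1) : ℤ) * (qden (pquot α) (n+2) : ℤ)
      - (qden (pquot α) (n+1) : ℤ) * (pnum' (pquot α) (n+2) : ℤ) = (-1)^(n+1) := by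
    have : (((pnum' (pquot α) (n+1) : ℤ) * (qden (pquot α) (n+2) : ℤ)
      - (qden (pquot α) (n+1) : ℤ) * (pnum' (pquot α) (n+2) : ℤ) : ℤ) : ℝ)
        = (((-1:ℤ)^(n+1) : ℤ) : ℝ) := by push_cast; linarith
    exact_mod_cast this
  refine ⟨(-1)^(n+1) * (qden (pquot α) (n+2) : ℤ),
    -((-1)^(n+1) * (pnum' (pquot α) (n+2) : ℤ)), ?_⟩
  have hsq : ((-1:ℤ)^(n+1)) * ((-1:ℤ)^(n+1)) = 1 := by
    rcases neg_one_pow_eq_or ℤ (n+1) with h | h <;> rw [h] <;> norm_num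
  calc (-1)^(n+1) * (qden (pquot α) (n+2) : ℤ) * (pnum' (pquot α) (n+1) : ℤ)
        + (-((-1)^(n+1) * (pnum' (pquot α) (n+2) : ℤ))) * (qden (pquot α) (n+1) : ℤ)
      = (-1)^(n+1) * ((pnum' (pquot α) (n+1) : ℤ) * (qden (pquot α) (n+2) : ℤ)
          - (qden (pquot α) (n+1) : ℤ) * (pnum' (pquot α) (n+2) : ℤ)) := by ring
    _ = (-1)^(n+1) * (-1)^(n+1) := by rw [detZ]
    _ = 1 := hsq

lemma st12_upper {α : ℝ} (hirr : Irrational α) (hα : α ∈ Set.Ioo (0:ℝ) 1) (n : ℕ) :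
    |α - (GenContFract.of α).convs n|
      ≤ 1 / ((qden (pquot α) (n+1) : ℝ) * (qden (pquot α) (n+2) : ℝ)) := by
  have h := abs_sub_convs_le (st12_not_term hirr hα n)
  have hc := st12_conts hirr hα
  rwa [GenContFract.den_eq_conts_b, GenContFract.den_eq_conts_b,
    GenContFract.nth_cont_eq_succ_nth_contAux, GenContFract.nth_cont_eq_succ_nth_contAux,
    (hc (n+1)).2, (hc (n+2)).2] at h

lemma st12_lower {α : ℝ} (hirr : Irrational α) (hα : α ∈ Set.Ioo (0:ℝ) 1) (n : ℕ) :
    1 / ((qden (pquot α) (n+1) : ℝ) * ((qden (pquot α) (n+2) : ℝ) + (qden (pquot α) (n+1) : ℝ)))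
      ≤ |α - (GenContFract.of α).convs n| := by
  obtain ⟨ifp, hs, hfr⟩ := st12_stream hirr hα n
  have hx := st12_iter hirr hα n
  have hne : ifp.fr ≠ 0 := by
    rw [hfr]; intro hz; exact hx.1 (hz ▸ ⟨0, by norm_num⟩)
  have tmp := sub_convs_eq hs
  simp only [hne, if_false] at tmp
  have hc := st12_conts hirr hα
  rw [(hc (n+1)).2] at tmp
  rw [(hc n).2] at tmp
  set B : ℝ := (qden (pquot α) (n+1) : ℝ) with hB
  set pB : ℝ := (qden (pquot α) n : ℝ) with hpB
  have hppos : ∀ k, 1 ≤ pquot α k := st12_pquot_pos hirr hα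
  have hBpos : (0:ℝ) < B := by
    have := st12_qden_pos hppos n; rw [hB]; exact_mod_cast Nat.lt_of_lt_of_le Nat.zero_lt_one this
  have hpBnn : (0:ℝ) ≤ pB := by rw [hpB]; positivity
  have hfrpos : 0 < ifp.fr := by
    rw [hfr]; exact hx.2.1
  have hfloor : ifp.fr⁻¹ < (pquot α n : ℝ) + 1 := by
    rw [hfr]
    exact Nat.lt_floor_add_one _
  have hden_lt : B * (ifp.fr⁻¹ * B + pB)
      < B * ((qden (pquot α) (n+2) : ℝ) + B) := by
    apply mul_lt_mul_of_pos_left _ hBpos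
    have : (qden (pquot α) (n+2) : ℝ) = (pquot α n : ℝ) * B + pB := by
      rw [st12_qden_rec]; push_cast; ring
    rw [this]
    have : ifp.fr⁻¹ * B < ((pquot α n : ℝ) + 1) * B := by
      exact mul_lt_mul_of_pos_right hfloor hBpos
    nlinarith
  have hdpos : 0 < B * (ifp.fr⁻¹ * B + pB) := by
    have : 0 < ifp.fr⁻¹ := inv_pos.mpr hfrpos
    have : 0 < ifp.fr⁻¹ * B + pB := by positivity
    positivity
  rw [tmp]
  rw [abs_div, abs_pow, abs_neg, abs_one, one_pow, abs_of_pos hdpos]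
  apply one_div_le_one_div_of_le hdpos hden_lt.le

lemma st12_qden_mono {a : ℕ → ℕ} (ha : ∀ n, 1 ≤ a n) : ∀ n, qden a n ≤ qden a (n+1) := by
  intro n
  cases n with
  | zero => simp [qden]
  | succ n =>
    rw [st12_qden_rec]
    nlinarith [st12_qden_pos ha n, ha n, Nat.zero_le (qden a n)]

lemma st12_den {α : ℝ} (hirr : Irrational α) (hα : α ∈ Set.Ioo (0:ℝ) 1) (n : ℕ) :
    ((pnum' (pquot α) (n+1) : ℚ) / (qden (pquot α) (n+1) : ℚ)).den
      = qden (pquot α) (n+1) := by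
  have hcop := st12_coprime hirr hα n
  have hb : (0:ℤ) < (qden (pquot α) (n+1) : ℤ) := by
    exact_mod_cast st12_qden_pos (st12_pquot_pos hirr hα) n
  have hco : Nat.Coprime ((pnum' (pquot α) (n+1) : ℤ)).natAbs
      ((qden (pquot α) (n+1) : ℤ)).natAbs := Int.isCoprime_iff_gcd_eq_one.mp hcop
  have := Rat.den_div_eq_of_coprime hb hco
  simpa using this

lemma st12_conv_rat {α : ℝ} (hirr : Irrational α) (hα : α ∈ Set.Ioo (0:ℝ) 1) (n : ℕ) :
    (GenContFract.of α).convs n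
      = (((pnum' (pquot α) (n+1) : ℚ) / (qden (pquot α) (n+1) : ℚ) : ℚ) : ℝ) := by
  rw [st12_conv hirr hα n]; push_cast; rfl

lemma st12_conv_irr {α : ℝ} (hirr : Irrational α) (hα : α ∈ Set.Ioo (0:ℝ) 1) (n : ℕ) :
    0 < |α - (GenContFract.of α).convs n| := by
  rw [abs_pos, sub_ne_zero, st12_conv_rat hirr hα n]
  exact hirr.ne_rat _

/-- The diophantine type of `α`: the supremum of those `w ≥ 1` such that
`|α − p/q| < 1/q^{w+1}` for infinitely many rationals `p/q`. -/
noncomputable def diophType (α : ℝ) : ℝ :=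
  sSup {w : ℝ | 1 ≤ w ∧
    {pq : ℤ × ℕ | 0 < pq.2 ∧
      |α - (pq.1 : ℝ) / (pq.2 : ℝ)| < 1 / (pq.2 : ℝ) ^ (w + 1)}.Infinite}

set_option maxHeartbeats 1000000 in
/-- If `a_{n+1} ≥ q_n^{η−1}` for infinitely many `n` and `a_{n+1} ≤ C·q_n^{η−1}` for all
large `n`, then the diophantine type of `α` equals `η`. -/
theorem stmt12 (α : ℝ) (hα : α ∈ Set.Ioo (0 : ℝ) 1) (hirr : Irrational α)
    (η C : ℝ) (hη : 1 < η) (hC : 0 < C)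
    (hinf : {n : ℕ |
      (qden (pquot α) (n + 1) : ℝ) ^ (η - 1) ≤ (pquot α n : ℝ)}.Infinite)
    (hbd : ∃ N : ℕ, ∀ n ≥ N,
      (pquot α n : ℝ) ≤ C * (qden (pquot α) (n + 1) : ℝ) ^ (η - 1)) :
    diophType α = η := by
  have ha : ∀ n, 1 ≤ pquot α n := st12_pquot_pos hirr hα
  have hrpow2 : ∀ x : ℝ, x ^ (2:ℝ) = x * x := by
    intro x
    rw [show (2:ℝ) = ((2:ℕ):ℝ) by norm_num, Real.rpow_natCast]; ring
  -- membership of η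
  have hmemS : {pq : ℤ × ℕ | 0 < pq.2 ∧
      |α - (pq.1 : ℝ) / (pq.2 : ℝ)| < 1 / (pq.2 : ℝ) ^ (η + 1)}.Infinite := by
    set T := {n : ℕ | (qden (pquot α) (n + 1) : ℝ) ^ (η - 1) ≤ (pquot α n : ℝ)} \ {0} with hT
    have hTinf : T.Infinite := hinf.diff (Set.finite_singleton 0)
    have hinj : Set.InjOn (fun n => ((pnum' (pquot α) (n+1) : ℤ), qden (pquot α) (n+1))) T := by
      intro m hm n hn hEq
      have hm1 : 1 ≤ m := by
        rcases Nat.eq_zero_or_pos m with h | h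
        · exact absurd (h ▸ hm).2 (by simp)
        · exact h
      have hn1 : 1 ≤ n := by
        rcases Nat.eq_zero_or_pos n with h | h
        · exact absurd (h ▸ hn).2 (by simp)
        · exact h
      exact st12_qden_inj ha hm1 hn1 (congrArg Prod.snd hEq)
    apply Set.Infinite.mono _ (hTinf.image hinj)
    rintro ⟨p, q⟩ ⟨n, hnT, hfn⟩
    obtain ⟨hcond, hn0⟩ := hnT
    have hn1 : 1 ≤ n := by
      rcases Nat.eq_zero_or_pos n with h | h
      · exact absurd (h ▸ hn0) (by simp)
      · exact h
    simp only [Prod.mk.injEq] at hfn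
    obtain ⟨hfp, hfq⟩ := hfn
    have hqpos : 0 < qden (pquot α) (n+1) := st12_qden_pos ha n
    refine ⟨by omega, ?_⟩
    subst hfp hfq
    set B : ℝ := (qden (pquot α) (n+1) : ℝ) with hBdef
    have hB1 : (1:ℝ) ≤ B := by rw [hBdef]; exact_mod_cast hqpos
    have hB0 : (0:ℝ) < B := by linarith
    have hu := st12_upper hirr hα n
    rw [st12_conv hirr hα n] at hu
    have hqn1 : (1:ℝ) ≤ (qden (pquot α) n : ℝ) := by
      obtain ⟨m, rfl⟩ : ∃ m, n = m + 1 := ⟨n - 1, by omega⟩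
      exact_mod_cast st12_qden_pos ha m
    have hrec : (qden (pquot α) (n+2) : ℝ)
        = (pquot α n : ℝ) * B + (qden (pquot α) n : ℝ) := by
      rw [st12_qden_rec]; push_cast; ring
    have hkey : B ^ (η+1) < B * (qden (pquot α) (n+2) : ℝ) := by
      have hsplit : B ^ (η+1) = B ^ (η-1) * (B*B) := by
        rw [show η+1 = (η-1) + 2 by ring, Real.rpow_add hB0, hrpow2]
      have h1 : B ^ (η-1) * (B*B) ≤ (pquot α n : ℝ) * (B*B) :=
        mul_le_mul_of_nonneg_right hcond (by positivity)
      rw [hsplit, hrec]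
      nlinarith
    calc |α - (pnum' (pquot α) (n+1) : ℝ) / B|
        ≤ 1 / (B * (qden (pquot α) (n+2) : ℝ)) := hu
      _ < 1 / B ^ (η+1) :=
          one_div_lt_one_div_of_lt (Real.rpow_pos_of_pos hB0 _) hkey
  -- upper bound
  have hub : ∀ w : ℝ, 1 ≤ w →
      {pq : ℤ × ℕ | 0 < pq.2 ∧
        |α - (pq.1 : ℝ) / (pq.2 : ℝ)| < 1 / (pq.2 : ℝ) ^ (w + 1)}.Infinite → w ≤ η := by
    intro w hw1 hwinf
    by_contra hgt
    push_neg at hgt   -- η < w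
    obtain ⟨N, hbd2⟩ := hbd
    obtain ⟨ε, hε0, hεle⟩ : ∃ ε : ℝ, 0 < ε ∧
        ∀ n < N, ε ≤ |α - (GenContFract.of α).convs n| := by
      clear hbd2
      induction N with
      | zero => exact ⟨1, one_pos, fun n hn => absurd hn (Nat.not_lt_zero n)⟩
      | succ M ih =>
        obtain ⟨ε, h0, hle⟩ := ih
        refine ⟨min ε |α - (GenContFract.of α).convs M|,
          lt_min h0 (st12_conv_irr hirr hα M), ?_⟩
        intro n hn
        rcases Nat.lt_succ_iff_lt_or_eq.mp hn with h | h
        · exact (min_le_left _ _).trans (hle n h)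
        · subst h; exact min_le_right _ _
    set K : ℝ := max (C + 2) (max (1/ε) 2) with hK
    have hK2 : (2:ℝ) ≤ K := le_max_of_le_right (le_max_right _ _)
    have hK0 : (0:ℝ) < K := by linarith
    have hclaim : ∀ p : ℤ, ∀ q : ℕ, 0 < q →
        |α - (p:ℝ)/(q:ℝ)| < 1/(q:ℝ)^(w+1) → (q:ℝ)^(w-η) < K := by
      intro p q hq happ
      have hq1 : (1:ℝ) ≤ (q:ℝ) := by exact_mod_cast hq
      have hq0 : (0:ℝ) < (q:ℝ) := by linarith
      by_cases hcase : (q:ℝ)^(w-1) < 2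
      · calc (q:ℝ)^(w-η) ≤ (q:ℝ)^(w-1) :=
            Real.rpow_le_rpow_of_exponent_le hq1 (by linarith)
          _ < 2 := hcase
          _ ≤ K := hK2
      · push_neg at hcase
        set r : ℚ := (p : ℚ) / (q : ℚ) with hr
        have hrcast : ((r:ℚ):ℝ) = (p:ℝ)/(q:ℝ) := by rw [hr]; push_cast; ring
        have hrden : r.den ≤ q := by
          have hdvd : ((r.den:ℤ)) ∣ ((q:ℕ):ℤ) := by
            rw [hr, show ((p:ℚ)/(q:ℚ) : ℚ) = Rat.divInt p (q:ℤ) by rw [Rat.divInt_eq_div]; norm_num]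
            exact Rat.den_dvd p (q:ℤ)
          exact_mod_cast Int.le_of_dvd (by exact_mod_cast hq) hdvd
        have hq2 : (q:ℝ)^(w+1) = (q:ℝ)^(w-1) * ((q:ℝ)*(q:ℝ)) := by
          rw [show w+1 = (w-1)+2 by ring, Real.rpow_add hq0, hrpow2]
        have h2q : 2 * ((q:ℝ)*(q:ℝ)) ≤ (q:ℝ)^(w+1) := by
          rw [hq2]; nlinarith
        have hleg : |α - (r:ℝ)| < 1/(2 * (r.den:ℝ)^2) := by
          rw [hrcast]
          refine happ.trans_le ?_
          have hden2 : (0:ℝ) < 2*(r.den:ℝ)^2 := by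
            have := r.pos; positivity
          apply one_div_le_one_div_of_le hden2
          have hrq : (r.den:ℝ) ≤ (q:ℝ) := by exact_mod_cast hrden
          have hrd0 : (0:ℝ) ≤ (r.den:ℝ) := by positivity
          nlinarith
        obtain ⟨n, hn⟩ := Real.exists_convs_eq_rat hleg
        have happ' : |α - (GenContFract.of α).convs n| < 1/(q:ℝ)^(w+1) := by
          rw [hn, hrcast]; exact happ
        have hqw : (0:ℝ) < (q:ℝ)^(w+1) := Real.rpow_pos_of_pos hq0 _
        by_cases hnN : n < N
        · have h2 : ε < 1/(q:ℝ)^(w+1) := (hεle n hnN).trans_lt happ'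
          have h3 : (q:ℝ)^(w+1) < 1/ε := by
            have := (lt_div_iff₀ hqw).mp h2
            rw [lt_div_iff₀ hε0]; linarith
          calc (q:ℝ)^(w-η) ≤ (q:ℝ)^(w+1) :=
              Real.rpow_le_rpow_of_exponent_le hq1 (by linarith)
            _ < 1/ε := h3
            _ ≤ K := le_max_of_le_right (le_max_left _ _)
        · push_neg at hnN
          set B : ℝ := (qden (pquot α) (n+1) : ℝ) with hBdef
          have hBnat : r.den = qden (pquot α) (n+1) := by
            have hreq : r = (pnum' (pquot α) (n+1) : ℚ) / (qden (pquot α) (n+1) : ℚ) := by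
              apply Rat.cast_injective (α := ℝ)
              show ((r:ℚ):ℝ) = _
              rw [← hn, st12_conv_rat hirr hα n]
            rw [hreq, st12_den hirr hα n]
          have hB1 : (1:ℝ) ≤ B := by
            rw [hBdef]; exact_mod_cast st12_qden_pos ha n
          have hB0 : (0:ℝ) < B := by linarith
          have hBq : B ≤ (q:ℝ) := by
            rw [hBdef, ← hBnat]; exact_mod_cast hrden
          have hbnd := hbd2 n hnN
          have hqden_mono : (qden (pquot α) n : ℝ) ≤ B := by
            rw [hBdef]; exact_mod_cast st12_qden_mono ha n
          have hB' : (qden (pquot α) (n+2) : ℝ) ≤ C * B^(η-1) * B + B := by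
            rw [st12_qden_rec]; push_cast
            nlinarith [mul_le_mul_of_nonneg_right hbnd (by linarith : (0:ℝ) ≤ B)]
          have hBrpow : B^(η+1) = B^(η-1)*(B*B) := by
            rw [show η+1 = (η-1) + 2 by ring, Real.rpow_add hB0, hrpow2]
          have hBB : B*B ≤ B^(η+1) := by
            rw [← hrpow2]
            exact Real.rpow_le_rpow_of_exponent_le hB1 (by linarith)
          have hdenbd : B * ((qden (pquot α) (n+2) : ℝ) + B) ≤ (C+2) * B^(η+1) := by
            have h5 : (qden (pquot α) (n+2) : ℝ) + B ≤ C * B^(η-1)*B + 2*B := by linarith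
            have h6 : B * ((qden (pquot α) (n+2) : ℝ) + B) ≤ B * (C*B^(η-1)*B + 2*B) :=
              mul_le_mul_of_nonneg_left h5 (by linarith)
            have h7 : B*(C*B^(η-1)*B + 2*B) = C*(B^(η-1)*(B*B)) + 2*(B*B) := by ring
            rw [h7, ← hBrpow] at h6
            nlinarith
          have hpos1 : (0:ℝ) < (C+2)*B^(η+1) := by positivity
          have hlow2 : 1/((C+2) * B^(η+1)) ≤ |α - (GenContFract.of α).convs n| := by
            refine le_trans ?_ (st12_lower hirr hα n)
            apply one_div_le_one_div_of_le _ hdenbd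
            have h8 : (0:ℝ) < (qden (pquot α) (n+2) : ℝ) + B := by
              have : (1:ℝ) ≤ (qden (pquot α) (n+2) : ℝ) := by
                exact_mod_cast st12_qden_pos ha (n+1)
              linarith
            positivity
          have hstep : (q:ℝ)^(w+1) < (C+2) * B^(η+1) :=
            (one_div_lt_one_div hpos1 hqw).mp (hlow2.trans_lt happ')
          have hstep2 : (q:ℝ)^(w+1) < (C+2) * (q:ℝ)^(η+1) := by
            refine hstep.trans_le ?_
            have := Real.rpow_le_rpow (by linarith : (0:ℝ) ≤ B) hBq (by linarith : (0:ℝ) ≤ η+1)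
            nlinarith
          have hsplit : (q:ℝ)^(w+1) = (q:ℝ)^(w-η) * (q:ℝ)^(η+1) := by
            rw [← Real.rpow_add hq0]; ring_nf
          have hqη : (0:ℝ) < (q:ℝ)^(η+1) := Real.rpow_pos_of_pos hq0 _
          have hfin : (q:ℝ)^(w-η) < C+2 := by
            rw [hsplit] at hstep2
            exact (mul_lt_mul_iff_left₀ hqη).mp hstep2
          exact hfin.trans_le (le_max_left _ _)
    -- derive finiteness, contradiction
    have hwη : (0:ℝ) < w - η := by linarith
    set Kb : ℝ := K ^ (w-η)⁻¹ with hKb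
    set M : ℕ := ⌈Kb⌉₊ with hM
    have hqbd : ∀ p : ℤ, ∀ q : ℕ, 0 < q →
        |α - (p:ℝ)/(q:ℝ)| < 1/(q:ℝ)^(w+1) → q ≤ M := by
      intro p q hq happ
      have hq0 : (0:ℝ) < (q:ℝ) := by exact_mod_cast hq
      have h1 := hclaim p q hq happ
      have h2 : (q:ℝ) < Kb := by
        have h3 : ((q:ℝ)^(w-η))^((w-η)⁻¹) < K^((w-η)⁻¹) :=
          Real.rpow_lt_rpow (Real.rpow_pos_of_pos hq0 _).le h1 (by positivity)
        rwa [← Real.rpow_mul hq0.le, mul_inv_cancel₀ hwη.ne', Real.rpow_one] at h3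
      have : (q:ℝ) ≤ (M:ℝ) := h2.le.trans (Nat.le_ceil Kb)
      exact_mod_cast this
    have hfin : {pq : ℤ × ℕ | 0 < pq.2 ∧
        |α - (pq.1 : ℝ) / (pq.2 : ℝ)| < 1 / (pq.2 : ℝ) ^ (w + 1)}.Finite := by
      apply Set.Finite.subset
        (Set.Finite.prod (Set.finite_Icc (-(2*(M:ℤ))) (2*(M:ℤ))) (Set.finite_Icc 0 M))
      rintro ⟨p, q⟩ ⟨hq, happ⟩
      have hqM : q ≤ M := hqbd p q hq happ
      have hq1 : (1:ℝ) ≤ (q:ℝ) := by exact_mod_cast hq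
      have hq0 : (0:ℝ) < (q:ℝ) := by linarith
      have hqw1 : (1:ℝ) ≤ (q:ℝ)^(w+1) := by
        have := Real.rpow_le_rpow_of_exponent_le hq1 (by linarith : (0:ℝ) ≤ w+1)
        rwa [Real.rpow_zero] at this
      have happ1 : |α - (p:ℝ)/(q:ℝ)| < 1 := by
        refine happ.trans_le ?_
        rw [div_le_one (by linarith)]; linarith
      have hαlt : |α| < 1 := by
        rw [abs_of_pos hα.1]; exact hα.2
      have hpq2 : |(p:ℝ)/(q:ℝ)| < 2 := by
        calc |(p:ℝ)/(q:ℝ)| = |((p:ℝ)/(q:ℝ) - α) + α| := by ring_nf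
          _ ≤ |(p:ℝ)/(q:ℝ) - α| + |α| := abs_add_le _ _
          _ = |α - (p:ℝ)/(q:ℝ)| + |α| := by rw [abs_sub_comm]
          _ < 2 := by linarith
      have hpabs : |(p:ℝ)| < 2 * (q:ℝ) := by
        rw [abs_div, abs_of_pos hq0, div_lt_iff₀ hq0] at hpq2
        linarith [hpq2]
      have hpZ : |p| ≤ 2 * (M:ℤ) := by
        have h2M : (2:ℝ) * (q:ℝ) ≤ 2 * (M:ℝ) := by
          have : (q:ℝ) ≤ (M:ℝ) := by exact_mod_cast hqM
          linarith
        have : (|p| : ℝ) ≤ 2 * (M:ℝ) := by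
          linarith
        exact_mod_cast this
      exact ⟨Set.mem_Icc.mpr (abs_le.mp hpZ), Set.mem_Icc.mpr ⟨Nat.zero_le q, hqM⟩⟩
    exact absurd hwinf hfin.not_infinite
  -- conclude
  unfold diophType
  apply IsGreatest.csSup_eq
  exact ⟨⟨hη.le, hmemS⟩, fun w hw => hub w hw.1 hw.2⟩
end

section
/- Let 𝒜 be a finite alphabet with d letters, (π, τ) combinatorial and suspension data with τ_* := Σ_{χ∈𝒜} τ_χ < 0, and let H := max_α h_α where h_α = Σ_{π_t(χ)<π_t(α)} τ_χ − Σ_{π_b(χ)<π_b(α)} τ_χ. Fix an integer M ≥ d+1 and assume max_χ ξ^t_χ < H/M, where ξ^t_χ = Σ_{π_t(χ')<π_t(χ)} τ_{χ'}. Let A be an integer with 1 ≤ A ≤ M−d and α ∈ 𝒜 with π_b(α) ≥ 2 such that ξ^b_α < −((M−A)/M)·H, where ξ^b_α = Σ_{π_b(χ)<π_b(α)} τ_χ. Then for every letter χ with π_b(α) ≤ π_b(χ) ≤ d one has ξ^b_χ < −((M+2−A−d)/M)·H, and moreover τ_* ≤ −((M+1−A−d)/M)·H. -/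
/-- Lemma on zippered rectangles with `τ_* < 0`: if all top singularity coordinates satisfy
`ξ^t_χ < H/M` (where `H = max h` and `M ≥ d+1`), and some letter `α` with `π_b(α) ≥ 2` has
`ξ^b_α < −((M−A)/M)·H` for some `1 ≤ A ≤ M−d`, then every letter `χ` with
`π_b(α) ≤ π_b(χ)` satisfies `ξ^b_χ < −((M+2−A−d)/M)·H`, and `τ_* ≤ −((M+1−A−d)/M)·H`. -/
theorem stmt18 {ALPH : Type*} [Fintype ALPH] [DecidableEq ALPH] [Nonempty ALPH]
    (d : ℕ) (hd : Fintype.card ALPH = d)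
    (πt πb : ALPH ≃ Fin d) (τ : ALPH → ℝ)
    (hsusT : ∀ α : ALPH, (πt α).val ≠ 0 →
      0 < ∑ χ ∈ Finset.univ.filter (fun χ => πt χ < πt α), τ χ)
    (hsusB : ∀ α : ALPH, (πb α).val ≠ 0 →
      (∑ χ ∈ Finset.univ.filter (fun χ => πb χ < πb α), τ χ) < 0)
    (hτ : (∑ χ, τ χ) < 0)
    (H : ℝ)
    (hH : IsGreatest (Set.range fun α : ALPH =>
      (∑ χ ∈ Finset.univ.filter (fun χ => πt χ < πt α), τ χ) -
        ∑ χ ∈ Finset.univ.filter (fun χ => πb χ < πb α), τ χ) H)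
    (M : ℕ) (hM : d + 1 ≤ M)
    (hξt : ∀ χ : ALPH,
      (∑ χ' ∈ Finset.univ.filter (fun χ' => πt χ' < πt χ), τ χ') < H / (M : ℝ))
    (A : ℕ) (hA1 : 1 ≤ A) (hA2 : A ≤ M - d)
    (α : ALPH) (hα : 1 ≤ (πb α).val)
    (hαb : (∑ χ ∈ Finset.univ.filter (fun χ => πb χ < πb α), τ χ) <
      -(((M : ℝ) - (A : ℝ)) / (M : ℝ)) * H) :
    (∀ χ : ALPH, πb α ≤ πb χ →
      (∑ χ' ∈ Finset.univ.filter (fun χ' => πb χ' < πb χ), τ χ') <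
        -(((M : ℝ) + 2 - (A : ℝ) - (d : ℝ)) / (M : ℝ)) * H) ∧
    (∑ χ, τ χ) ≤ -(((M : ℝ) + 1 - (A : ℝ) - (d : ℝ)) / (M : ℝ)) * H := by
  -- abbreviations
  set ξt : ALPH → ℝ := fun χ => ∑ χ' ∈ Finset.univ.filter (fun χ' => πt χ' < πt χ), τ χ' with hξtdef
  set ξb : ALPH → ℝ := fun χ => ∑ χ' ∈ Finset.univ.filter (fun χ' => πb χ' < πb χ), τ χ' with hξbdef
  have hMpos : (0:ℝ) < (M:ℝ) := by
    have : 0 < M := by omega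
    exact_mod_cast this
  -- ξt is nonnegative
  have hξt0 : ∀ χ : ALPH, 0 ≤ ξt χ := by
    intro χ
    rcases eq_or_ne (πt χ).val 0 with h0 | h0
    · have hempty : Finset.univ.filter (fun χ' => πt χ' < πt χ) = ∅ := by
        ext c
        simp only [Finset.mem_filter, Finset.mem_univ, true_and, Finset.notMem_empty, iff_false]
        intro hc
        rw [Fin.lt_def, h0] at hc
        omega
      simp [hξtdef, hempty]
    · exact le_of_lt (hsusT χ h0)
  have hHM : 0 < H / (M:ℝ) := by
    have χ0 := Classical.arbitrary ALPH
    exact lt_of_le_of_lt (hξt0 χ0) (hξt χ0)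
  -- summation step lemma for an arbitrary bijection
  have hstep : ∀ (π : ALPH ≃ Fin d) (c : ALPH),
      (∑ c' ∈ Finset.univ.filter (fun c' => π c' ≤ π c), τ c')
        = (∑ c' ∈ Finset.univ.filter (fun c' => π c' < π c), τ c') + τ c := by
    intro π c
    have hins : Finset.univ.filter (fun c' => π c' ≤ π c)
        = insert c (Finset.univ.filter (fun c' => π c' < π c)) := by
      ext e
      simp only [Finset.mem_filter, Finset.mem_univ, true_and, Finset.mem_insert]
      constructor
      · intro he
        rcases lt_or_eq_of_le he with h | h
        · exact Or.inr h
        · exact Or.inl (π.injective h)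
      · rintro (rfl | h)
        · exact le_refl _
        · exact le_of_lt h
    rw [hins, Finset.sum_insert (by simp)]
    ring
  -- every τ c is < H / M
  have hτHM : ∀ c : ALPH, τ c < H / (M:ℝ) := by
    intro c
    by_cases hlast : (πt c).val + 1 = d
    · -- c is the last letter on top
      have huniv : Finset.univ.filter (fun c' => πt c' ≤ πt c) = Finset.univ := by
        ext e
        simp only [Finset.mem_filter, Finset.mem_univ, true_and, iff_true]
        rw [Fin.le_def]
        have := (πt e).isLt
        omega
      have h1 := hstep πt c
      rw [huniv] at h1
      have : ξt c + τ c < 0 := by rw [hξtdef]; simpa [← h1] using hτ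
      have := hξt0 c
      linarith
    · -- c has a successor on top
      have hsucc : (πt c).val + 1 < d := by
        have := (πt c).isLt; omega
      set c' := πt.symm ⟨(πt c).val + 1, hsucc⟩ with hc'
      have hπc' : πt c' = ⟨(πt c).val + 1, hsucc⟩ := πt.apply_symm_apply _
      have hfilt : Finset.univ.filter (fun e => πt e < πt c')
          = Finset.univ.filter (fun e => πt e ≤ πt c) := by
        ext e
        simp only [Finset.mem_filter, Finset.mem_univ, true_and]
        rw [Fin.lt_def, Fin.le_def, hπc']
        simp only [Fin.val_mk]
        omega
      have h1 := hstep πt c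
      have h2 : ξt c' = ξt c + τ c := by
        rw [hξtdef]
        simp only
        rw [hfilt, h1]
      have h3 : ξt c' < H / (M:ℝ) := hξt c'
      have h4 := hξt0 c
      linarith
  have hdα : (πb α).val < d := (πb α).isLt
  have hd2 : 2 ≤ d := by omega
  -- main claim for part 1
  have main : ∀ χ : ALPH, πb α ≤ πb χ →
      ξb χ < -(((M : ℝ) + 2 - (A : ℝ) - (d : ℝ)) / (M : ℝ)) * H := by
    intro χ hle
    set S := Finset.univ.filter (fun c => πb α ≤ πb c ∧ πb c < πb χ) with hS
    have hsplit : ξb χ = ξb α + ∑ c ∈ S, τ c := by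
      rw [hξbdef]
      simp only
      rw [← Finset.sum_union]
      · congr 1
        ext c
        simp only [Finset.mem_filter, Finset.mem_univ, true_and, Finset.mem_union, hS]
        constructor
        · intro h
          rcases lt_or_ge (πb c) (πb α) with h' | h'
          · exact Or.inl h'
          · exact Or.inr ⟨h', h⟩
        · rintro (h | ⟨h1, h2⟩)
          · exact lt_of_lt_of_le h hle
          · exact h2
      · rw [Finset.disjoint_left]
        intro c hc1 hc2
        simp only [hS, Finset.mem_filter, Finset.mem_univ, true_and] at hc1 hc2
        exact absurd hc1 (not_lt_of_ge hc2.1)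
    have hScard : S.card ≤ d - 2 := by
      have h1 : S.card ≤ (Finset.Ico (πb α) (πb χ)).card := by
        apply Finset.card_le_card_of_injOn (fun c => πb c)
        · intro c hc
          simp only [Finset.mem_coe, hS, Finset.mem_filter, Finset.mem_univ, true_and] at hc
          exact Finset.mem_Ico.mpr hc
        · intro x _ y _ h
          exact πb.injective h
      rw [Fin.card_Ico] at h1
      have := (πb χ).isLt
      omega
    have hSsum : ∑ c ∈ S, τ c ≤ ((d:ℝ) - 2) * (H / (M:ℝ)) := by
      calc ∑ c ∈ S, τ c ≤ S.card • (H / (M:ℝ)) :=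
            Finset.sum_le_card_nsmul S τ (H / (M:ℝ)) (fun c _ => le_of_lt (hτHM c))
        _ = (S.card : ℝ) * (H / (M:ℝ)) := by rw [nsmul_eq_mul]
        _ ≤ ((d:ℝ) - 2) * (H / (M:ℝ)) := by
            apply mul_le_mul_of_nonneg_right _ (le_of_lt hHM)
            have h2 : (S.card : ℝ) ≤ ((d - 2 : ℕ) : ℝ) := by exact_mod_cast hScard
            have h3 : ((d - 2 : ℕ) : ℝ) = (d:ℝ) - 2 := by
              rw [Nat.cast_sub hd2]; norm_num
            linarith
    have hαb' : ξb α < -(((M : ℝ) - (A : ℝ)) / (M : ℝ)) * H := hαb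
    have heq : -(((M:ℝ) - (A:ℝ)) / (M:ℝ)) * H + ((d:ℝ) - 2) * (H / (M:ℝ))
        = -(((M : ℝ) + 2 - (A : ℝ) - (d : ℝ)) / (M : ℝ)) * H := by
      field_simp
      ring
    rw [hsplit]
    linarith
  constructor
  · exact main
  · -- part 2: bound on τ_*
    have hd1 : d - 1 < d := by omega
    set χL := πb.symm ⟨d - 1, hd1⟩ with hχL
    have hπχL : πb χL = ⟨d - 1, hd1⟩ := πb.apply_symm_apply _
    have hleL : πb α ≤ πb χL := by
      rw [Fin.le_def, hπχL]
      simp only [Fin.val_mk]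
      omega
    have hmainL := main χL hleL
    have huniv : Finset.univ.filter (fun c' => πb c' ≤ πb χL) = Finset.univ := by
      ext e
      simp only [Finset.mem_filter, Finset.mem_univ, true_and, iff_true]
      rw [Fin.le_def, hπχL]
      simp only [Fin.val_mk]
      have := (πb e).isLt
      omega
    have h1 := hstep πb χL
    rw [huniv] at h1
    have hτL := hτHM χL
    have heq : -(((M : ℝ) + 2 - (A : ℝ) - (d : ℝ)) / (M : ℝ)) * H + H / (M:ℝ)
        = -(((M : ℝ) + 1 - (A : ℝ) - (d : ℝ)) / (M : ℝ)) * H := by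
      field_simp
      ring
    have : (∑ χ, τ χ) = ξb χL + τ χL := by rw [hξbdef]; simpa using h1
    linarith
end

section
/- Let T_α: [0,1) → [0,1), x ↦ x + α mod 1 be the rotation by an irrational α. For every point p ∈ [0,1), the liminf recurrence exponent satisfies w̲_rec(T_α, p) = 1/w(α), where w̲_rec(T_α, p) = liminf_{r→0+} log R(T_α, p, r)/(−log r), R(T_α, p, r) = min{n ≥ 1 : ‖nα‖ < r} with ‖x‖ the distance to the nearest integer, and w(α) is the diophantine type of α. -/
open scoped ENNReal

/-- Distance of a real number to the nearest integer. -/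
noncomputable def nearestIntDist (x : ℝ) : ℝ := |x - round x|

/-- Recurrence time of `p` at scale `r` for the rotation `T_α(x) = x + α (mod 1)`:
the least `n ≥ 1` with `‖T_α^n p − p‖ < r` (distance on the circle `ℝ/ℤ`). -/
noncomputable def rotRecTime (α p r : ℝ) : ℕ :=
  sInf {n : ℕ | 1 ≤ n ∧ nearestIntDist ((fun x => Int.fract (x + α))^[n] p - p) < r}

/-- The diophantine type of `α` as an extended real: the supremum of those `w ≥ 1` for which
`|qα − p| < 1/q^w` has infinitely many integer solutions `(p, q)` with `q ≥ 1`. -/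
noncomputable def diophTypeE (α : ℝ) : ℝ≥0∞ :=
  sSup (ENNReal.ofReal '' {w : ℝ | 1 ≤ w ∧
    {pq : ℤ × ℕ | 0 < pq.2 ∧
      |(pq.2 : ℝ) * α - (pq.1 : ℝ)| < 1 / (pq.2 : ℝ) ^ w}.Infinite})

namespace Stmt19

lemma nid_sub_int (x : ℝ) (m : ℤ) : nearestIntDist (x - m) = nearestIntDist x := by
  unfold nearestIntDist
  rw [round_sub_intCast]
  push_cast
  ring_nf

lemma nid_le (x : ℝ) (m : ℤ) : nearestIntDist x ≤ |x - m| := by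
  rcases le_or_gt (1/2 : ℝ) |x - m| with h | h
  · exact le_trans (abs_sub_round x) h
  · have hm : (m : ℝ) = round x := by
      have h1 : |x - (round x : ℝ)| ≤ 1/2 := abs_sub_round x
      have h2 : |(m : ℝ) - (round x : ℝ)| < 1 := by
        calc |(m:ℝ) - round x| = |(m - x) + (x - round x)| := by ring_nf
          _ ≤ |(m:ℝ) - x| + |x - round x| := abs_add_le _ _
          _ < 1/2 + 1/2 := by rw [abs_sub_comm]; exact add_lt_add_of_lt_of_le h h1
          _ = 1 := by norm_num
      have : |(m - round x : ℤ)| < 1 := by exact_mod_cast (by push_cast; exact h2 : |((m - round x : ℤ) : ℝ)| < 1)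
      have := Int.abs_lt_one_iff.mp this
      have : m = round x := by omega
      exact_mod_cast this
    rw [nearestIntDist, hm]

lemma iter_eq (α p : ℝ) (hp : p ∈ Set.Ico (0:ℝ) 1) (n : ℕ) :
    (fun x => Int.fract (x + α))^[n] p = Int.fract (p + n * α) := by
  induction n with
  | zero => simpa using (Int.fract_eq_self.2 ⟨hp.1, hp.2⟩).symm
  | succ n ih =>
      rw [Function.iterate_succ_apply', ih]
      show Int.fract (Int.fract (p + n * α) + α) = _
      have : Int.fract (p + n * α) + α = (p + (n+1) * α) - (⌊p + n * α⌋ : ℤ) := by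
        rw [Int.fract]; push_cast; ring
      rw [this, Int.fract_sub_intCast]
      push_cast; ring_nf

lemma nid_iter (α p : ℝ) (hp : p ∈ Set.Ico (0:ℝ) 1) (n : ℕ) :
    nearestIntDist ((fun x => Int.fract (x + α))^[n] p - p) = nearestIntDist (n * α) := by
  rw [iter_eq α p hp n]
  have : Int.fract (p + n * α) - p = (n * α) - (⌊p + n * α⌋ : ℤ) := by
    rw [Int.fract]; ring
  rw [this, nid_sub_int]

end Stmt19

namespace Stmt19

lemma psi_pos {α : ℝ} (hirr : Irrational α) {n : ℕ} (hn : 1 ≤ n) :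
    0 < nearestIntDist (n * α) := by
  rw [nearestIntDist, abs_pos, sub_ne_zero]
  exact (hirr.natCast_mul (by omega : n ≠ 0)).ne_int _

lemma exists_pos_lb {α : ℝ} (hirr : Irrational α) (N : ℕ) :
    ∃ c > 0, ∀ n : ℕ, 1 ≤ n → n ≤ N → c ≤ nearestIntDist (n * α) := by
  induction N with
  | zero => exact ⟨1, one_pos, fun n h1 h2 => by omega⟩
  | succ N ih =>
      obtain ⟨c, hc, hcb⟩ := ih
      refine ⟨min c (nearestIntDist ((N+1 : ℕ) * α)), lt_min hc (psi_pos hirr (by omega)), ?_⟩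
      intro n h1 h2
      rcases Nat.lt_or_ge n (N+1) with h | h
      · exact le_trans (min_le_left _ _) (hcb n h1 (by omega))
      · have : n = N + 1 := by omega
        rw [this]; exact min_le_right _ _

/-- Dirichlet: arbitrarily large `q` with `ψ q < min r (1/(q+1))`. -/
lemma dirichlet {α : ℝ} (hirr : Irrational α) (r : ℝ) (hr : 0 < r) (N : ℕ) :
    ∃ q : ℕ, N < q ∧ 1 ≤ q ∧ nearestIntDist (q * α) < r ∧
      nearestIntDist (q * α) < 1 / q := by
  obtain ⟨c, hc, hcb⟩ := exists_pos_lb hirr N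
  obtain ⟨n, hn⟩ := exists_nat_gt (max (1/r) (1/c))
  have hn1 : 1 ≤ n := by
    have h1 : (1:ℝ)/r ≤ n := le_of_lt (lt_of_le_of_lt (le_max_left _ _) hn)
    by_contra h
    push_neg at h
    interval_cases n
    · simp at h1; exact absurd h1 (not_le.2 (by positivity))
  obtain ⟨k, hk0, hkn, hk⟩ := Real.exists_nat_abs_mul_sub_round_le α (n := n) (by omega)
  have hψk : nearestIntDist (k * α) ≤ 1 / (n + 1) := hk
  have hnpos : (0:ℝ) < n := by exact_mod_cast hn1
  have hlt_r : nearestIntDist (k * α) < r := by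
    have : (1:ℝ) / (n+1) < r := by
      rw [div_lt_iff₀ (by positivity)]
      have : 1/r < n := lt_of_le_of_lt (le_max_left _ _) hn
      rw [div_lt_iff₀ hr] at this
      nlinarith
    linarith
  have hlt_c : nearestIntDist (k * α) < c := by
    have : (1:ℝ) / (n+1) < c := by
      rw [div_lt_iff₀ (by positivity)]
      have : 1/c < n := lt_of_le_of_lt (le_max_right _ _) hn
      rw [div_lt_iff₀ hc] at this
      nlinarith
    linarith
  have hkN : N < k := by
    by_contra h
    push_neg at h
    exact absurd (hcb k hk0 h) (not_le.2 hlt_c)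
  refine ⟨k, hkN, hk0, hlt_r, ?_⟩
  calc nearestIntDist (k * α) ≤ 1 / (n+1) := hψk
    _ ≤ 1 / (k+1) := by
        apply div_le_div_of_nonneg_left one_pos.le (by positivity)
        exact_mod_cast Nat.add_le_add_right hkn 1
    _ < 1 / k := by
        apply div_lt_div_of_pos_left one_pos (by exact_mod_cast hk0)
        linarith
  
end Stmt19

namespace Stmt19

/-- From the infinite pair set, the set of denominators is infinite. -/
lemma snd_infinite {α w : ℝ} (hw : 1 ≤ w)
    (h : {pq : ℤ × ℕ | 0 < pq.2 ∧
      |(pq.2 : ℝ) * α - (pq.1 : ℝ)| < 1 / (pq.2 : ℝ) ^ w}.Infinite) :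
    {q : ℕ | 0 < q ∧ nearestIntDist (q * α) < 1 / (q : ℝ) ^ w}.Infinite := by
  set A := {pq : ℤ × ℕ | 0 < pq.2 ∧
      |(pq.2 : ℝ) * α - (pq.1 : ℝ)| < 1 / (pq.2 : ℝ) ^ w} with hA
  have himg : (Prod.snd '' A).Infinite := by
    intro hfin
    apply h
    have hsub : A ⊆ ⋃ q ∈ Prod.snd '' A,
        (fun p : ℤ => (p, q)) '' {p : ℤ | |(q : ℝ) * α - (p : ℝ)| < 1} := by
      rintro ⟨p, q⟩ hpq
      obtain ⟨hq, habs⟩ := hpq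
      have hq1 : (1:ℝ) ≤ (q:ℝ) ^ w := by
        apply Real.one_le_rpow (by exact_mod_cast hq) (by linarith)
      have : |(q : ℝ) * α - (p : ℝ)| < 1 := by
        refine habs.trans_le ?_
        rw [div_le_one (by linarith)]; exact hq1
      exact Set.mem_biUnion ⟨(p, q), ⟨hq, habs⟩, rfl⟩ ⟨p, this, rfl⟩
    refine Set.Finite.subset (Set.Finite.biUnion hfin fun q _ => ?_) hsub
    apply Set.Finite.image
    have : {p : ℤ | |(q : ℝ) * α - (p : ℝ)| < 1} ⊆
        Set.Icc ⌈(q : ℝ) * α - 1⌉ ⌊(q : ℝ) * α + 1⌋ := by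
      intro p hp
      rw [Set.mem_setOf_eq, abs_lt] at hp
      constructor
      · exact Int.ceil_le.2 (by linarith)
      · exact Int.le_floor.2 (by linarith)
    exact (Set.finite_Icc _ _).subset this
  refine himg.mono ?_
  rintro q ⟨⟨p, q'⟩, ⟨hq, habs⟩, rfl⟩
  exact ⟨hq, lt_of_le_of_lt (nid_le _ p) habs⟩

/-- The set of denominators maps into the pair set, preserving (in)finiteness. -/
lemma denset_finite {α w : ℝ}
    (h : {pq : ℤ × ℕ | 0 < pq.2 ∧
      |(pq.2 : ℝ) * α - (pq.1 : ℝ)| < 1 / (pq.2 : ℝ) ^ w}.Finite) :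
    {q : ℕ | 0 < q ∧ nearestIntDist (q * α) < 1 / (q : ℝ) ^ w}.Finite := by
  set B := {q : ℕ | 0 < q ∧ nearestIntDist (q * α) < 1 / (q : ℝ) ^ w}
  have hmaps : ∀ q ∈ B, (round ((q:ℝ) * α), q) ∈
      {pq : ℤ × ℕ | 0 < pq.2 ∧ |(pq.2 : ℝ) * α - (pq.1 : ℝ)| < 1 / (pq.2 : ℝ) ^ w} := by
    rintro q ⟨hq, hnid⟩
    exact ⟨hq, hnid⟩
  have : B ⊆ Prod.snd '' (((fun q : ℕ => ((round ((q:ℝ) * α), q) : ℤ × ℕ)) '' B)) := by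
    intro q hq
    exact ⟨_, Set.mem_image_of_mem _ hq, rfl⟩
  refine Set.Finite.subset (Set.Finite.image _ (Set.Finite.subset h ?_)) this
  rintro x ⟨q, hq, rfl⟩
  exact hmaps q hq

end Stmt19

/-- For the irrational rotation `T_α` and every `p ∈ [0,1)`, the liminf recurrence exponent
equals `1/w(α)`. -/
theorem stmt19 (α : ℝ) (hirr : Irrational α) (p : ℝ) (hp : p ∈ Set.Ico (0 : ℝ) 1) :
    Filter.liminf
        (fun r => ENNReal.ofReal (Real.log (rotRecTime α p r : ℝ) / (-Real.log r)))
        (nhdsWithin 0 (Set.Ioi 0)) =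
      (diophTypeE α)⁻¹ := by
  classical
  set S : Set ℝ := {w : ℝ | 1 ≤ w ∧
    {pq : ℤ × ℕ | 0 < pq.2 ∧
      |(pq.2 : ℝ) * α - (pq.1 : ℝ)| < 1 / (pq.2 : ℝ) ^ w}.Infinite} with hS
  have hWdef : diophTypeE α = sSup (ENNReal.ofReal '' S) := rfl
  set L := Filter.liminf
        (fun r => ENNReal.ofReal (Real.log (rotRecTime α p r : ℝ) / (-Real.log r)))
        (nhdsWithin 0 (Set.Ioi 0)) with hL
  -- rewrite rotRecTime in terms of ψ
  have hRT : ∀ r : ℝ, rotRecTime α p r = sInf {n : ℕ | 1 ≤ n ∧ nearestIntDist (n * α) < r} := by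
    intro r
    unfold rotRecTime
    congr 1
    ext n
    simp only [Set.mem_setOf_eq, Stmt19.nid_iter α p hp n]
  have hRmem : ∀ r : ℝ, 0 < r →
      1 ≤ rotRecTime α p r ∧ nearestIntDist ((rotRecTime α p r : ℕ) * α) < r := by
    intro r hr
    rw [hRT r]
    have hne : {n : ℕ | 1 ≤ n ∧ nearestIntDist (n * α) < r}.Nonempty := by
      obtain ⟨q, _, hq1, hqr, _⟩ := Stmt19.dirichlet hirr r hr 0
      exact ⟨q, hq1, hqr⟩
    exact Nat.sInf_mem hne
  have hRle : ∀ r : ℝ, ∀ n : ℕ, 1 ≤ n → nearestIntDist (n * α) < r →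
      rotRecTime α p r ≤ n := by
    intro r n h1 h2
    rw [hRT r]
    exact Nat.sInf_le ⟨h1, h2⟩
  -- 1 ∈ S
  have h1S : (1:ℝ) ∈ S := by
    refine ⟨le_refl 1, ?_⟩
    have hB : {q : ℕ | 0 < q ∧ nearestIntDist (q * α) < 1 / (q:ℝ)}.Infinite := by
      apply Set.infinite_of_not_bddAbove
      rintro ⟨N, hN⟩
      obtain ⟨q, hqN, hq1, _, hq⟩ := Stmt19.dirichlet hirr 1 one_pos N
      exact absurd (hN ⟨hq1, hq⟩) (not_le.2 hqN)
    have : ((fun q : ℕ => ((round ((q:ℝ) * α), q) : ℤ × ℕ)) ''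
        {q : ℕ | 0 < q ∧ nearestIntDist (q * α) < 1 / (q:ℝ)}).Infinite := by
      apply hB.image
      intro a _ b _ hab
      simpa using congrArg Prod.snd hab
    refine this.mono ?_
    rintro x ⟨q, ⟨hq, hnid⟩, rfl⟩
    refine ⟨hq, ?_⟩
    simpa [Real.rpow_one, nearestIntDist] using hnid
  have hW1 : (1:ℝ≥0∞) ≤ diophTypeE α := by
    rw [hWdef]
    have := le_sSup (Set.mem_image_of_mem ENNReal.ofReal h1S)
    simpa using this
  -- Upper bound : L ≤ W⁻¹, via W ≤ L⁻¹
  have hupper : diophTypeE α ≤ L⁻¹ := by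
    rw [hWdef]
    apply sSup_le
    rintro x ⟨w', hw'S, rfl⟩
    obtain ⟨hw'1, hw'inf⟩ := hw'S
    have hw'0 : (0:ℝ) < w' := by linarith
    -- L ≤ ofReal (1/w')
    have hle : L ≤ ENNReal.ofReal (1/w') := by
      apply Filter.liminf_le_of_frequently_le'
      rw [Filter.frequently_iff]
      intro U hU
      rw [mem_nhdsGT_iff_exists_Ioo_subset] at hU
      obtain ⟨ε, hε, hsub⟩ := hU
      have hε0 : (0:ℝ) < ε := hε
      have hBinf := Stmt19.snd_infinite hw'1 hw'inf
      obtain ⟨M, hM⟩ := exists_nat_gt (max 1 (1/ε))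
      obtain ⟨q, hqB, hqM⟩ := hBinf.exists_gt M
      obtain ⟨hq0, hqnid⟩ := hqB
      have hq1R : (1:ℝ) < q := by
        have : (M:ℝ) < q := by exact_mod_cast hqM
        have h1M : (1:ℝ) ≤ M := le_of_lt (lt_of_le_of_lt (le_max_left _ _) hM)
        linarith
      set r := ((q:ℝ) ^ w')⁻¹ with hr
      have hqw_pos : (0:ℝ) < (q:ℝ) ^ w' := Real.rpow_pos_of_pos (by linarith) _
      have hr0 : 0 < r := by positivity
      have hqle : (q:ℝ) ≤ (q:ℝ) ^ w' := by
        nth_rewrite 1 [← Real.rpow_one (q:ℝ)]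
        exact Real.rpow_le_rpow_of_exponent_le (by linarith) hw'1
      have hrε : r < ε := by
        have h1 : r ≤ (q:ℝ)⁻¹ := by
          apply inv_anti₀ (by linarith) hqle
        have h2 : (q:ℝ)⁻¹ < ε := by
          rw [inv_lt_comm₀ (by linarith) hε0]
          calc ε⁻¹ = 1/ε := (one_div ε).symm
            _ ≤ max 1 (1/ε) := le_max_right _ _
            _ < M := hM
            _ < q := by exact_mod_cast hqM
        linarith
      refine ⟨r, hsub ⟨hr0, hrε⟩, ?_⟩
      -- f r ≤ ofReal (1/w')
      have hnid' : nearestIntDist ((q:ℕ) * α) < r := by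
        rw [hr, ← one_div]
        exact hqnid
      have hRq : rotRecTime α p r ≤ q := hRle r q hq0 hnid'
      have hR1 := (hRmem r hr0).1
      have hlogr : Real.log r = -(w' * Real.log q) := by
        rw [hr, Real.log_inv, Real.log_rpow (by linarith)]
      have hlogq : 0 < Real.log q := Real.log_pos hq1R
      apply ENNReal.ofReal_le_ofReal
      rw [hlogr, neg_neg]
      have hlogR : Real.log (rotRecTime α p r : ℝ) ≤ Real.log q := by
        apply Real.log_le_log (by exact_mod_cast hR1)
        exact_mod_cast hRq
      calc Real.log (rotRecTime α p r : ℝ) / (w' * Real.log q)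
          ≤ Real.log q / (w' * Real.log q) := by
            apply div_le_div_of_nonneg_right hlogR (by positivity)
        _ = 1 / w' := by field_simp
    calc ENNReal.ofReal w' = (ENNReal.ofReal (1/w'))⁻¹ := by
          rw [one_div, ENNReal.ofReal_inv_of_pos hw'0, inv_inv]
      _ ≤ L⁻¹ := by exact ENNReal.inv_le_inv.2 hle
  -- Lower bound : L⁻¹ ≤ W
  have hlower : L⁻¹ ≤ diophTypeE α := by
    apply le_of_forall_gt_imp_ge_of_dense
    intro b hb
    rcases eq_or_ne b ⊤ with rfl | hbT
    · exact le_top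
    have hb1 : (1:ℝ≥0∞) < b := lt_of_le_of_lt hW1 hb
    set w'' := b.toReal with hw''
    have hw''1 : (1:ℝ) < w'' := by
      have := (ENNReal.toReal_lt_toReal (by simp) hbT).2 hb1
      simpa using this
    have hw''0 : (0:ℝ) < w'' := by linarith
    have hbw : b = ENNReal.ofReal w'' := (ENNReal.ofReal_toReal hbT).symm
    -- w'' ∉ S
    have hnotS : w'' ∉ S := by
      intro hmem
      have : ENNReal.ofReal w'' ≤ diophTypeE α := by
        rw [hWdef]; exact le_sSup (Set.mem_image_of_mem _ hmem)
      rw [← hbw] at this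
      exact absurd this (not_le.2 hb)
    have hfin : {q : ℕ | 0 < q ∧ nearestIntDist (q * α) < 1 / (q:ℝ) ^ w''}.Finite := by
      apply Stmt19.denset_finite
      by_contra hinf
      exact hnotS ⟨hw''1.le, hinf⟩
    obtain ⟨Q₀, hQ₀⟩ := hfin.bddAbove
    obtain ⟨c, hc0, hcb⟩ := Stmt19.exists_pos_lb hirr Q₀
    set ε := min c 1 with hε
    have hε0 : 0 < ε := lt_min hc0 one_pos
    -- eventually, ofReal (1/w'') ≤ f r
    have hev : ∀ r ∈ Set.Ioo (0:ℝ) ε,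
        ENNReal.ofReal (1/w'') ≤
          ENNReal.ofReal (Real.log (rotRecTime α p r : ℝ) / (-Real.log r)) := by
      intro r ⟨hr0, hrε⟩
      have hr1 : r < 1 := lt_of_lt_of_le hrε (min_le_right _ _)
      have hrc : r < c := lt_of_lt_of_le hrε (min_le_left _ _)
      obtain ⟨hn1, hnψ⟩ := hRmem r hr0
      set n := rotRecTime α p r with hn
      have hnQ : Q₀ < n := by
        by_contra h
        push_neg at h
        exact absurd (hcb n hn1 h) (not_le.2 (lt_trans hnψ hrc))
      have hnB : n ∉ {q : ℕ | 0 < q ∧ nearestIntDist (q * α) < 1 / (q:ℝ) ^ w''} := by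
        intro hmem
        exact absurd (hQ₀ hmem) (not_le.2 hnQ)
      have hψlb : 1 / (n:ℝ) ^ w'' ≤ nearestIntDist (n * α) := by
        by_contra h
        push_neg at h
        exact hnB ⟨hn1, h⟩
      have hn1R : (1:ℝ) ≤ n := by exact_mod_cast hn1
      have hnw_pos : (0:ℝ) < (n:ℝ) ^ w'' := Real.rpow_pos_of_pos (by linarith) _
      have hkey : 1 / (n:ℝ) ^ w'' < r := lt_of_le_of_lt hψlb hnψ
      have hlogr_neg : Real.log r < 0 := Real.log_neg hr0 hr1
      have hloglt : -(w'' * Real.log n) < Real.log r := by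
        have := Real.log_lt_log (by positivity) hkey
        rwa [one_div, Real.log_inv, Real.log_rpow (by linarith)] at this
      have hgoal : 1 / w'' ≤ Real.log (n:ℝ) / (-Real.log r) := by
        rw [div_le_div_iff₀ hw''0 (by linarith)]
        nlinarith
      exact ENNReal.ofReal_le_ofReal hgoal
    have hLlb : ENNReal.ofReal (1/w'') ≤ L := by
      rw [hL]
      have hconst : Filter.liminf (fun _ : ℝ => ENNReal.ofReal (1/w''))
          (nhdsWithin 0 (Set.Ioi 0)) = ENNReal.ofReal (1/w'') := Filter.liminf_const _
      rw [← hconst]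
      exact Filter.liminf_le_liminf (by
        filter_upwards [Ioo_mem_nhdsGT hε0] with r hr
        exact hev r hr)
    calc L⁻¹ ≤ (ENNReal.ofReal (1/w''))⁻¹ := ENNReal.inv_le_inv.2 hLlb
      _ = ENNReal.ofReal w'' := by
          rw [one_div, ENNReal.ofReal_inv_of_pos hw''0, inv_inv]
      _ = b := hbw.symm
  -- combine
  have h1 : L ≤ (diophTypeE α)⁻¹ := by
    have := ENNReal.inv_le_inv.2 hupper
    rwa [inv_inv] at this
  have h2 : (diophTypeE α)⁻¹ ≤ L := by
    have := ENNReal.inv_le_inv.2 hlower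
    rwa [inv_inv] at this
  exact le_antisymm h1 h2
end
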